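/- arXiv:2507.02701 — 2 statements merged into one kernel-verified Lean document; each statement's English description precedes it below -/
import Mathlib

section
/- Let D be a piece decomposition of a forest F. Pieces f, f' ∈ D are adjacent if and only if the corresponding nodes v, v' of the hierarchy H_D satisfy one of: (1) v' is the sibling immediately to the right of v and both are leaves; (2) v' is the leftmost or rightmost child of v and v' is a leaf; (3) v' is the only child of v and v' is not a leaf. In all these cases D' := (D ∖ {f, f'}) ∪ {f ∪ f'} is a piece decomposition of F. Moreover, if M is a piece matching between D and a forest G and both f and f' are clean with respect to M, then there exist adjacent pieces g, g' of G with (f,g), (f',g') ∈ M; the set M' := (M ∖ {(f,g),(f',g')}) ∪ {(f∪f', g∪g')} is a piece matching between D' and G; the piece f∪f' is clean with respect to M'; and every piece in D ∖ {f,f'} that is clean with respect to M remains clean with respect to M'. -/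
open scoped NNReal ENNReal

attribute [local instance] Classical.propDecidable

/-- A labeled parenthesis over the alphabet `α`: `(true, a)` is the opening
parenthesis with label `a`, and `(false, a)` is the closing parenthesis. -/
abbrev Paren (α : Type*) := Bool × α

/-- Balanced strings of labeled parentheses (forests), following Definition 2.1:
the smallest set containing the empty string, closed under concatenation, and
containing `(_a · F · )_a` for every forest `F` and label `a`. -/
inductive IsForest {α : Type*} : List (Paren α) → Prop
  | nil : IsForest []
  | append {F G : List (Paren α)} : IsForest F → IsForest G → IsForest (F ++ G)
  | wrap {F : List (Paren α)} (a : α) : IsForest F → IsForest ((true, a) :: F ++ [(false, a)])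

/-- The fragment `l[i..j)` of a list. -/
def frag {β : Type*} (l : List β) (i j : ℕ) : List β := (l.take j).drop i

/-- `IsNode F i j` means that `[i..j]` is a node of the forest `F`: `F[i]` is an
opening parenthesis, `F[j]` is a closing parenthesis with the same label,
and `F(i..j)` is balanced. -/
def IsNode {α : Type*} (F : List (Paren α)) (i j : ℕ) : Prop :=
  i < j ∧ j < F.length ∧ (∃ a : α, F[i]? = some (true, a) ∧ F[j]? = some (false, a)) ∧
    IsForest (frag F (i + 1) j)

/-- `MateRel F i j` holds when positions `i` and `j` are the paired parentheses
of a node of `F` (in either order); `j` is the mate of `i`. -/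
def MateRel {α : Type*} (F : List (Paren α)) (i j : ℕ) : Prop :=
  IsNode F i j ∨ IsNode F j i

/-- A single edge of the alignment graph: horizontal, vertical, or diagonal. -/
def AlignStep (p q : ℕ × ℕ) : Prop :=
  q = (p.1 + 1, p.2) ∨ q = (p.1, p.2 + 1) ∨ q = (p.1 + 1, p.2 + 1)

/-- An alignment of `X[x..x')` onto `Y[y..y')` is a path in the alignment graph
from `(x, y)` to `(x', y')`, interpreted as its sequence of vertices. -/
def IsAlignment (x x' y y' : ℕ) (path : List (ℕ × ℕ)) : Prop :=
  path.head? = some (x, y) ∧ path.getLast? = some (x', y') ∧ path.Chain' AlignStep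

/-- The alignment (path) aligns character `f` of `X` to character `g` of `Y`
(a diagonal edge `(f, g) → (f + 1, g + 1)`). -/
def AlignsAt (path : List (ℕ × ℕ)) (f g : ℕ) : Prop :=
  ∃ t, path[t]? = some (f, g) ∧ path[t + 1]? = some (f + 1, g + 1)

/-- The alignment deletes character `f` of `X` (a horizontal edge). -/
def DeletesAt (path : List (ℕ × ℕ)) (f : ℕ) : Prop :=
  ∃ t g, path[t]? = some (f, g) ∧ path[t + 1]? = some (f + 1, g)

/-- The alignment inserts character `g` of `Y` (a vertical edge). -/
def InsertsAt (path : List (ℕ × ℕ)) (g : ℕ) : Prop :=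
  ∃ t f, path[t]? = some (f, g) ∧ path[t + 1]? = some (f, g + 1)

/-- Consistency condition of forest alignments (Definition 2.6): whenever the
alignment aligns `F[f]` to `G[g]`, it also aligns the mate of `F[f]` to the mate
of `G[g]`.  An alignment satisfying this condition is a forest alignment. -/
def Consistent {α : Type*} (F G : List (Paren α)) (path : List (ℕ × ℕ)) : Prop :=
  ∀ f g f' g', AlignsAt path f g → MateRel F f f' → MateRel G g g' → AlignsAt path f' g'

/-- The width of the alignment is at most `m`: every vertex `(x, y)` on the path
satisfies `|x - y| ≤ m`. -/
def WidthLE (m : ℕ) (path : List (ℕ × ℕ)) : Prop :=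
  ∀ p ∈ path, p.1 ≤ p.2 + m ∧ p.2 ≤ p.1 + m

/-- The label of the `i`-th character of `X` (as an element of `Σ ∪ {ε}`,
encoded by `Option α`; out-of-range positions give `ε`). -/
def lbl {α : Type*} (X : List (Paren α)) (i : ℕ) : Option α := (X[i]?).map Prod.snd

/-- Cost of an alignment path with respect to the weight function `w̃(p, q) = ½·w(λ(p), λ(q))`:
horizontal edges cost `½·w(λ(X[x]), ε)`, vertical edges `½·w(ε, λ(Y[y]))`, and
diagonal edges `½·w(λ(X[x]), λ(Y[y]))`. -/
noncomputable def pathCost {α : Type*} (w : Option α → Option α → ℝ≥0)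
    (X Y : List (Paren α)) : List (ℕ × ℕ) → ℝ≥0
  | [] => 0
  | [_] => 0
  | p :: q :: rest =>
      (if q.1 = p.1 + 1 ∧ q.2 = p.2 then (1 / 2 : ℝ≥0) * w (lbl X p.1) none
       else if q.1 = p.1 ∧ q.2 = p.2 + 1 then (1 / 2 : ℝ≥0) * w none (lbl Y p.2)
       else (1 / 2 : ℝ≥0) * w (lbl X p.1) (lbl Y p.2)) + pathCost w X Y (q :: rest)

/-- A weight function `w : (Σ ∪ {ε})² → ℝ≥0` is normalized if `w(a, a) = 0` and
`w(a, b) ≥ 1` for distinct `a, b`. -/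
def Normalized {α : Type*} (w : Option α → Option α → ℝ≥0) : Prop :=
  (∀ a, w a a = 0) ∧ ∀ a b, a ≠ b → 1 ≤ w a b

/-- A weight function satisfies the triangle inequality (is a quasimetric). -/
def Quasimetric {α : Type*} (w : Option α → Option α → ℝ≥0) : Prop :=
  ∀ a b c, w a c ≤ w a b + w b c

/-- The weighted tree edit distance `ted^w(F[f..f'), G[g..g'))`: the minimum cost
of a forest alignment of the fragment `F[f..f')` onto the fragment `G[g..g')`
(`∞` if no forest alignment exists). -/
noncomputable def tedFrag {α : Type*} (w : Option α → Option α → ℝ≥0)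
    (F G : List (Paren α)) (f f' g g' : ℕ) : ℝ≥0∞ :=
  ⨅ p : { p : List (ℕ × ℕ) // IsAlignment f f' g g' p ∧ Consistent F G p },
    (pathCost w F G p.1 : ℝ≥0∞)

/-- The bounded tree edit distance `bted_k^w(F[f..f'), G[g..g'))`: the minimum
cost of a forest alignment of width at most `2k` (`∞` if none exists). -/
noncomputable def btedFrag {α : Type*} (k : ℕ) (w : Option α → Option α → ℝ≥0)
    (F G : List (Paren α)) (f f' g g' : ℕ) : ℝ≥0∞ :=
  ⨅ p : { p : List (ℕ × ℕ) //
      IsAlignment f f' g g' p ∧ Consistent F G p ∧ WidthLE (2 * k) p },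
    (pathCost w F G p.1 : ℝ≥0∞)

/-- A tree: a balanced string of the form `(_a · F · )_a`. -/
def IsTree {α : Type*} (T : List (Paren α)) : Prop :=
  ∃ (a : α) (F : List (Paren α)), IsForest F ∧ T = (true, a) :: F ++ [(false, a)]

/-- A context `⟨L; R⟩`: a pair of non-empty strings such that `L · R` is a tree. -/
def IsContext {α : Type*} (L R : List (Paren α)) : Prop :=
  L ≠ [] ∧ R ≠ [] ∧ IsTree (L ++ R)

/-- A piece of a forest: either a subforest `F[l..r)` or a context
`⟨F[a..b); F[c..d)⟩`, recorded by its boundary positions. -/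
inductive Piece : Type
  | forest (l r : ℕ)
  | context (a b c d : ℕ)
  deriving DecidableEq

/-- The set of positions (characters) covered by a piece. -/
def pieceChars : Piece → Finset ℕ
  | .forest l r => Finset.Ico l r
  | .context a b c d => Finset.Ico a b ∪ Finset.Ico c d

/-- Validity of a piece of the forest `F`: a subforest is a balanced fragment
`F[l..r)`; a context `⟨F[a..b); F[c..d)⟩` requires `F[a..d)` to be a tree and
`F[b..c)` to be balanced, with both halves non-empty. -/
def IsPiece {α : Type*} (F : List (Paren α)) : Piece → Prop
  | .forest l r => l ≤ r ∧ r ≤ F.length ∧ IsForest (frag F l r)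
  | .context a b c d => a < b ∧ b ≤ c ∧ c < d ∧ d ≤ F.length ∧
      IsTree (frag F a d) ∧ IsForest (frag F b c)

/-- Piece decompositions of the balanced fragment `F[i..j)` (Definition 5.1). -/
inductive IsPieceDecomp {α : Type*} (F : List (Paren α)) : ℕ → ℕ → Finset Piece → Prop
  | empty (i : ℕ) : IsPieceDecomp F i i ∅
  | single {i j : ℕ} : i < j → j ≤ F.length → IsForest (frag F i j) →
      IsPieceDecomp F i j {Piece.forest i j}
  | split {i m j : ℕ} {DL DR : Finset Piece} : i < m → m < j →
      IsPieceDecomp F i m DL → IsPieceDecomp F m j DR → IsPieceDecomp F i j (DL ∪ DR)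
  | context {i b c j : ℕ} {D' : Finset Piece} :
      IsPiece F (Piece.context i b c j) → IsPieceDecomp F b c D' →
      IsPieceDecomp F i j (insert (Piece.context i b c j) D')

/-- The alignment matches the piece of `F` perfectly to the piece of `G`:
corresponding fragments are equal and every character of the piece is aligned
(matched) to the corresponding character of the other piece. -/
def MatchesPerfectly {α : Type*} (F G : List (Paren α)) (path : List (ℕ × ℕ)) :
    Piece → Piece → Prop
  | .forest l r, .forest l' r' =>
      r - l = r' - l' ∧ frag F l r = frag G l' r' ∧
      ∀ t, l + t < r → AlignsAt path (l + t) (l' + t)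
  | .context a b c d, .context a' b' c' d' =>
      b - a = b' - a' ∧ d - c = d' - c' ∧
      frag F a b = frag G a' b' ∧ frag F c d = frag G c' d' ∧
      (∀ t, a + t < b → AlignsAt path (a + t) (a' + t)) ∧
      (∀ t, c + t < d → AlignsAt path (c + t) (c' + t))
  | _, _ => False

/-- A piece matching between `F` and `G` for the threshold `k` (Definition 5.2):
the `F`-pieces of the pairs are pairwise disjoint, and there exists a forest
alignment of `F` onto `G` of width at most `2k` that matches `f` to `g`
perfectly for every pair `(f, g)` of the matching. -/
def IsPieceMatching {α : Type*} (k : ℕ) (F G : List (Paren α))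
    (M : Finset (Piece × Piece)) : Prop :=
  (∀ p ∈ M, IsPiece F p.1 ∧ IsPiece G p.2) ∧
  (∀ p ∈ M, ∀ q ∈ M, p ≠ q → Disjoint (pieceChars p.1) (pieceChars q.1)) ∧
  ∃ path : List (ℕ × ℕ), IsAlignment 0 F.length 0 G.length path ∧ Consistent F G path ∧
    WidthLE (2 * k) path ∧ ∀ p ∈ M, MatchesPerfectly F G path p.1 p.2

/-- The position `p` is (immediately) adjacent to the piece `f`: it is not a
character of `f`, but it immediately precedes or follows a character of `f`. -/
def posAdjacent (f : Piece) (p : ℕ) : Prop :=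
  p ∉ pieceChars f ∧ (p + 1 ∈ pieceChars f ∨ ∃ q ∈ pieceChars f, p = q + 1)

/-- A piece `f` of `F` is clean with respect to the matching `M`: it is matched
to some piece `g` of `G`, no unmatched character of `F` is adjacent to `f`, and
no unmatched character of `G` is adjacent to `g`. -/
def CleanPiece {α : Type*} (F G : List (Paren α)) (M : Finset (Piece × Piece))
    (f : Piece) : Prop :=
  ∃ g, (f, g) ∈ M ∧
    (∀ p < F.length, posAdjacent f p → ∃ q ∈ M, p ∈ pieceChars q.1) ∧
    (∀ p < G.length, posAdjacent g p → ∃ q ∈ M, p ∈ pieceChars q.2)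

/-- `AdjacentUnion f f' u`: the pieces `f` and `f'` are adjacent (Definition 5.3)
and `u` is their union `f ∪ f'`:
(1) two subforests sharing a boundary; (2) a context and a subforest sharing a
boundary of one of the context halves; (3) two nested contexts sharing both half
boundaries. -/
def AdjacentUnion : Piece → Piece → Piece → Prop
  | .forest l r, .forest l' r', u => r = l' ∧ u = .forest l r'
  | .context a b c d, .forest l' r', u =>
      (b = l' ∧ c = r' ∧ u = .forest a d) ∨
      (b = l' ∧ c ≠ r' ∧ u = .context a r' c d) ∨
      (c = r' ∧ b ≠ l' ∧ u = .context a b l' d)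
  | .context a b c d, .context a' b' c' d', u =>
      b = a' ∧ c = d' ∧ u = .context a b' c' d
  | .forest _ _, .context _ _ _ _, _ => False

/-- Two pieces are adjacent if their union is again a piece. -/
def Adjacent (f f' : Piece) : Prop := ∃ u, AdjacentUnion f f' u

/-! ### Auxiliary theory: stack characterization of forests -/

section ForestStack
variable {α : Type*}

/-- One step of the parenthesis-matching stack machine. -/
noncomputable def pushP {α : Type*} : Option (List α) → Paren α → Option (List α)
  | none, _ => none
  | some s, (true, a) => some (a :: s)
  | some s, (false, a) =>
      match s with
      | [] => none
      | b :: t => if a = b then some t else none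

/-- Run the stack machine over a string. -/
noncomputable def scanP {α : Type*} (s : Option (List α)) (L : List (Paren α)) : Option (List α) :=
  L.foldl pushP s

@[simp] lemma scanP_nil (s : Option (List α)) : scanP s ([] : List (Paren α)) = s := rfl

lemma scanP_cons (s : Option (List α)) (c : Paren α) (L : List (Paren α)) :
    scanP s (c :: L) = scanP (pushP s c) L := rfl

lemma scanP_append (s : Option (List α)) (X Y : List (Paren α)) :
    scanP s (X ++ Y) = scanP (scanP s X) Y := List.foldl_append ..

@[simp] lemma scanP_none (L : List (Paren α)) : scanP (none : Option (List α)) L = none := by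
  induction L with
  | nil => rfl
  | cons c L ih => rw [scanP_cons]; simpa [pushP] using ih

lemma scanP_forest {L : List (Paren α)} (h : IsForest L) :
    ∀ s : List α, scanP (some s) L = some s := by
  induction h with
  | nil => intro s; rfl
  | append hF hG ihF ihG => intro s; rw [scanP_append, ihF, ihG]
  | @wrap F a hF ih =>
      intro s
      rw [show ((true, a) :: F ++ [(false, a)]) = (true, a) :: (F ++ [(false, a)]) from rfl,
        scanP_cons]
      have h1 : pushP (some s) (true, a) = some (a :: s) := rfl
      rw [h1, scanP_append, ih (a :: s)]
      show pushP (some (a :: s)) (false, a) = some s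
      simp [pushP]

lemma sim_aux (a : α) : ∀ (M : List (Paren α)) (t : List α),
    (∀ j ≤ M.length, ∃ t', scanP (some (t ++ [a])) (M.take j) = some (t' ++ [a])) →
    scanP (some (t ++ [a])) M = some [a] →
    scanP (some t) M = some [] := by
  intro M
  induction M with
  | nil =>
      intro t _ hfin
      simp only [scanP_nil, Option.some.injEq] at hfin
      have : t = [] := by
        have := congrArg List.length hfin; simp at this; simpa using this
      simp [this]
  | cons c M' ih =>
      intro t H hfin
      obtain ⟨b, x⟩ := c
      cases b with
      | true =>
          rw [scanP_cons] at hfin ⊢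
          simp only [pushP] at hfin ⊢
          have hfin' : scanP (some ((x :: t) ++ [a])) M' = some [a] := by simpa using hfin
          refine ih (x :: t) ?_ hfin'
          intro j hj
          have := H (j + 1) (by simpa using Nat.succ_le_succ hj)
          simpa [List.take_succ_cons, scanP_cons, pushP] using this
      | false =>
          have h1 := H 1 (by simp)
          obtain ⟨t1, ht1⟩ := h1
          simp only [List.take_succ_cons, List.take_zero, scanP_cons, scanP_nil] at ht1
          cases t with
          | nil =>
              simp only [List.nil_append, pushP] at ht1
              by_cases hxa : x = a
              · simp [hxa] at ht1
              · simp [hxa] at ht1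
          | cons y t' =>
              simp only [List.cons_append, pushP] at ht1
              by_cases hxy : x = y
              · rw [scanP_cons] at hfin ⊢
                simp only [pushP, List.cons_append, hxy, if_pos rfl] at hfin ⊢
                refine ih t' ?_ hfin
                intro j hj
                have := H (j + 1) (by simpa using Nat.succ_le_succ hj)
                simpa [List.take_succ_cons, scanP_cons, pushP, hxy] using this
              · simp [hxy] at ht1

end ForestStack
section ForestStack2
variable {α : Type*}

lemma isForest_of_scanP : ∀ (n : ℕ) (M : List (Paren α)), M.length ≤ n →
    scanP (some ([] : List α)) M = some [] → IsForest M := by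
  intro n
  induction n with
  | zero =>
      intro M hM _
      have : M = [] := List.length_eq_zero_iff.mp (Nat.le_zero.mp hM)
      subst this; exact .nil
  | succ n ih =>
      intro M hM hscan
      match M with
      | [] => exact .nil
      | (false, x) :: M' =>
          rw [scanP_cons] at hscan
          simp [pushP] at hscan
      | (true, a) :: M' =>
          rw [scanP_cons] at hscan
          have hpush : pushP (some ([] : List α)) (true, a) = some [a] := rfl
          rw [hpush] at hscan
          have hex : ∃ j, j ≤ M'.length ∧ scanP (some [a]) (M'.take j) = some [] :=
            ⟨M'.length, le_rfl, by simpa using hscan⟩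
          classical
          obtain ⟨k, ⟨hklen, hkscan⟩, hnotmin⟩ :
              ∃ k, (k ≤ M'.length ∧ scanP (some [a]) (M'.take k) = some []) ∧
                ∀ j, j < k → ¬ (j ≤ M'.length ∧ scanP (some [a]) (M'.take j) = some []) :=
            ⟨Nat.find hex, Nat.find_spec hex, fun j hj => Nat.find_min hex hj⟩
          have inv : ∀ j, j < k → ∃ t : List α,
              scanP (some [a]) (M'.take j) = some (t ++ [a]) := by
            intro j
            induction j with
            | zero => intro _; exact ⟨[], by simp⟩
            | succ j ihj =>
                intro hj
                obtain ⟨t, ht⟩ := ihj (Nat.lt_of_succ_lt hj)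
                have hjlen : j < M'.length := by
                  have h1 : j + 1 < k := hj
                  omega
                have htake : M'.take (j + 1) = M'.take j ++ [M'[j]] := by
                  rw [List.take_succ]
                  simp [List.getElem?_eq_getElem hjlen]
                have hstep : scanP (some [a]) (M'.take (j+1))
                    = pushP (some (t ++ [a])) M'[j] := by
                  rw [htake, scanP_append, ht]; rfl
                have hprop : scanP (some [a]) (M'.take (j+1)) ≠ none := by
                  intro hnone
                  have hsplit : M'.take k = M'.take (j+1) ++ (M'.take k).drop (j+1) := by
                    have h2 : (M'.take k).take (j+1) = M'.take (j+1) := by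
                      rw [List.take_take]; congr 1; omega
                    conv_lhs => rw [← List.take_append_drop (j+1) (M'.take k)]
                    rw [h2]
                  rw [hsplit, scanP_append, hnone, scanP_none] at hkscan
                  cases hkscan
                rcases hMj : M'[j] with ⟨b, x⟩
                cases b with
                | true =>
                    refine ⟨x :: t, ?_⟩
                    rw [hstep, hMj]; rfl
                | false =>
                    rw [hMj] at hstep
                    cases t with
                    | nil =>
                        simp only [List.nil_append] at hstep
                        by_cases hxa : x = a
                        · exfalso
                          apply hnotmin (j+1) hj
                          refine ⟨hjlen, ?_⟩
                          rw [hstep]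
                          simp [pushP, hxa]
                        · exfalso
                          apply hprop
                          rw [hstep]
                          simp [pushP, hxa]
                    | cons y t' =>
                        by_cases hxy : x = y
                        · refine ⟨t', ?_⟩
                          rw [hstep]
                          simp [pushP, hxy]
                        · exfalso
                          apply hprop
                          rw [hstep]
                          simp [pushP, hxy]
          have hkpos : 0 < k := by
            rcases Nat.eq_zero_or_pos k with h0 | h0
            · exfalso
              rw [h0] at hkscan
              simp at hkscan
            · exact h0
          have hk1len : k - 1 < M'.length := by omega
          obtain ⟨t, ht⟩ := inv (k-1) (by omega)
          have htakek : M'.take k = M'.take (k-1) ++ [M'[k-1]] := by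
            conv_lhs => rw [show k = (k-1) + 1 by omega]
            rw [List.take_succ, List.getElem?_eq_getElem hk1len]
            rfl
          have hlast : pushP (some (t ++ [a])) M'[k-1] = some [] := by
            rw [htakek, scanP_append, ht] at hkscan
            exact hkscan
          rcases hMk : M'[k-1] with ⟨b, x⟩
          rw [hMk] at hlast
          cases b with
          | true => exact absurd hlast (by simp [pushP])
          | false =>
              have hta : t = [] ∧ x = a := by
                cases t with
                | nil =>
                    by_cases hxa : x = a
                    · exact ⟨rfl, hxa⟩
                    · simp [pushP, hxa] at hlast
                | cons y t' =>
                    by_cases hxy : x = y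
                    · simp [pushP, hxy] at hlast
                    · simp [pushP, hxy] at hlast
              obtain ⟨rfl, hxa⟩ := hta
              rw [hxa] at hMk
              -- inner part
              set Minner := M'.take (k-1) with hMinner
              have hsiminv : ∀ j ≤ Minner.length, ∃ t',
                  scanP (some (([] : List α) ++ [a])) (Minner.take j) = some (t' ++ [a]) := by
                intro j hj
                have hlen : Minner.length = k - 1 := by
                  rw [hMinner, List.length_take]; omega
                have : Minner.take j = M'.take j := by
                  rw [hMinner, List.take_take]; congr 1; omega
                rw [this]
                simpa using inv j (by omega)
              have hinner0 : scanP (some (([] : List α) ++ [a])) Minner = some [a] := by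
                simpa using ht
              have hinner : scanP (some ([] : List α)) Minner = some [] :=
                sim_aux a Minner [] hsiminv hinner0
              have hFinner : IsForest Minner := by
                refine ih Minner ?_ hinner
                have : Minner.length = k - 1 := by rw [hMinner, List.length_take]; omega
                simp only [List.length_cons] at hM
                omega
              -- rest
              set Mrest := M'.drop k with hMrest
              have hrest : scanP (some ([] : List α)) Mrest = some [] := by
                have hsplit : M' = M'.take k ++ Mrest := (List.take_append_drop k M').symm
                rw [hsplit, scanP_append, hkscan] at hscan
                exact hscan
              have hFrest : IsForest Mrest := by
                refine ih Mrest ?_ hrest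
                have : Mrest.length = M'.length - k := by rw [hMrest, List.length_drop]
                simp only [List.length_cons] at hM
                omega
              have hMeq : (true, a) :: M' = ((true, a) :: Minner ++ [(false, a)]) ++ Mrest := by
                have : M' = (Minner ++ [(false, a)]) ++ Mrest := by
                  conv_lhs => rw [← List.take_append_drop k M']
                  rw [htakek, hMk]
                rw [this]
                simp
              rw [hMeq]
              exact IsForest.append (IsForest.wrap a hFinner) hFrest

lemma isForest_iff_scanP {L : List (Paren α)} :
    IsForest L ↔ scanP (some ([] : List α)) L = some [] :=
  ⟨fun h => scanP_forest h [], fun h => isForest_of_scanP L.length L le_rfl h⟩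

lemma isForest_append_right {X Y : List (Paren α)} (hX : IsForest X)
    (hXY : IsForest (X ++ Y)) : IsForest Y := by
  rw [isForest_iff_scanP] at hXY ⊢
  rwa [scanP_append, scanP_forest hX] at hXY

lemma isForest_append_left {X Y : List (Paren α)} (hY : IsForest Y)
    (hXY : IsForest (X ++ Y)) : IsForest X := by
  have h := (isForest_iff_scanP).mp hXY
  rw [scanP_append] at h
  rcases hr : scanP (some ([] : List α)) X with _ | s
  · rw [hr, scanP_none] at h; cases h
  · rw [hr, scanP_forest hY s] at h
    rw [isForest_iff_scanP, hr]
    exact h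

lemma IsTree.isForest {T : List (Paren α)} (h : IsTree T) : IsForest T := by
  obtain ⟨a, Fo, hFo, rfl⟩ := h
  exact IsForest.wrap a hFo

end ForestStack2

section FragLemmas
variable {β : Type*}

lemma frag_eq_take_drop (l : List β) (i j : ℕ) : frag l i j = (l.drop i).take (j - i) := by
  rw [frag, List.drop_take]

@[simp] lemma frag_self (l : List β) (i : ℕ) : frag l i i = [] := by
  simp [frag_eq_take_drop]

lemma frag_append (l : List β) {i m j : ℕ} (h1 : i ≤ m) (h2 : m ≤ j) :
    frag l i m ++ frag l m j = frag l i j := by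
  rw [frag_eq_take_drop, frag_eq_take_drop, frag_eq_take_drop]
  have hd : l.drop m = (l.drop i).drop (m - i) := by
    rw [List.drop_drop]; congr 1; omega
  rw [hd, ← List.take_add]
  congr 1; omega

lemma frag_split (l : List β) (i m j : ℕ) (h1 : i ≤ m) (h2 : m ≤ j) :
    frag l i j = frag l i m ++ frag l m j := (frag_append l h1 h2).symm

lemma frag_length (l : List β) (i j : ℕ) : (frag l i j).length = min j l.length - i := by
  simp [frag, Nat.sub_min_sub_right]

lemma frag_length_of_le (l : List β) {i j : ℕ} (h : j ≤ l.length) :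
    (frag l i j).length = j - i := by
  rw [frag_length]; omega

end FragLemmas
section DecompLemmas
variable {α : Type*} {F : List (Paren α)}

lemma decomp_pieces {i j : ℕ} {D : Finset Piece} (h : IsPieceDecomp F i j D) :
    ∀ p ∈ D, IsPiece F p ∧ pieceChars p ⊆ Finset.Ico i j ∧ (pieceChars p).Nonempty := by
  induction h with
  | empty i => intro p hp; exact absurd hp (Finset.notMem_empty p)
  | @single i j hij hjF hfor =>
      intro p hp
      rw [Finset.mem_singleton] at hp
      subst hp
      exact ⟨⟨le_of_lt hij, hjF, hfor⟩, by simp [pieceChars],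
        by simp [pieceChars, Finset.nonempty_Ico, hij]⟩
  | @split i m j DL DR him hmj hL hR ihL ihR =>
      intro p hp
      rcases Finset.mem_union.mp hp with hp | hp
      · obtain ⟨h1, h2, h3⟩ := ihL p hp
        exact ⟨h1, h2.trans (Finset.Ico_subset_Ico le_rfl (le_of_lt hmj)), h3⟩
      · obtain ⟨h1, h2, h3⟩ := ihR p hp
        exact ⟨h1, h2.trans (Finset.Ico_subset_Ico (le_of_lt him) le_rfl), h3⟩
  | @context i b c j D' hpiece hD' ih =>
      intro p hp
      obtain ⟨hib, hbc, hcj, hjF, htree, hforest⟩ := hpiece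
      rcases Finset.mem_insert.mp hp with hp | hp
      · subst hp
        refine ⟨⟨hib, hbc, hcj, hjF, htree, hforest⟩, ?_, ?_⟩
        · simp only [pieceChars]
          intro x hx
          simp only [Finset.mem_union, Finset.mem_Ico] at hx ⊢
          omega
        · exact ⟨i, by simp only [pieceChars, Finset.mem_union, Finset.mem_Ico]; omega⟩
      · obtain ⟨h1, h2, h3⟩ := ih p hp
        refine ⟨h1, h2.trans ?_, h3⟩
        exact Finset.Ico_subset_Ico (le_of_lt hib) (le_of_lt hcj)

lemma decomp_disjoint {i j : ℕ} {D : Finset Piece} (h : IsPieceDecomp F i j D) :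
    ∀ p ∈ D, ∀ q ∈ D, p ≠ q → Disjoint (pieceChars p) (pieceChars q) := by
  induction h with
  | empty i => intro p hp; exact absurd hp (Finset.notMem_empty p)
  | single hij hjF hfor =>
      intro p hp q hq hne
      rw [Finset.mem_singleton] at hp hq
      exact absurd (hp.trans hq.symm) hne
  | @split i m j DL DR him hmj hL hR ihL ihR =>
      intro p hp q hq hne
      have hdisj : Disjoint (Finset.Ico i m) (Finset.Ico m j) := Finset.Ico_disjoint_Ico_consecutive i m j
      rcases Finset.mem_union.mp hp with hp | hp <;> rcases Finset.mem_union.mp hq with hq | hq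
      · exact ihL p hp q hq hne
      · exact hdisj.mono (decomp_pieces hL p hp).2.1 (decomp_pieces hR q hq).2.1
      · exact (hdisj.mono (decomp_pieces hL q hq).2.1 (decomp_pieces hR p hp).2.1).symm
      · exact ihR p hp q hq hne
  | @context i b c j D' hpiece hD' ih =>
      intro p hp q hq hne
      obtain ⟨hib, hbc, hcj, hjF, _, _⟩ := hpiece
      have hdisj : ∀ x ∈ D', Disjoint (pieceChars (Piece.context i b c j)) (pieceChars x) := by
        intro x hx
        refine Finset.disjoint_left.mpr ?_
        intro z hz hz'
        have h2 := (decomp_pieces hD' x hx).2.1 hz'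
        simp only [pieceChars, Finset.mem_union, Finset.mem_Ico] at hz h2
        omega
      rcases Finset.mem_insert.mp hp with hp | hp <;> rcases Finset.mem_insert.mp hq with hq | hq
      · exact absurd (hp.trans hq.symm) hne
      · subst hp; exact hdisj q hq
      · subst hq; exact (hdisj p hp).symm
      · exact ih p hp q hq hne

lemma decomp_forest {i j : ℕ} {D : Finset Piece} (h : IsPieceDecomp F i j D) :
    IsForest (frag F i j) := by
  induction h with
  | empty i => rw [frag_self]; exact .nil
  | single hij hjF hfor => exact hfor
  | @split i m j DL DR him hmj hL hR ihL ihR =>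
      rw [← frag_append F (le_of_lt him) (le_of_lt hmj)]
      exact .append ihL ihR
  | context hpiece hD' ih => exact hpiece.2.2.2.2.1.isForest

lemma decomp_empty_eq {i : ℕ} {D : Finset Piece} (h : IsPieceDecomp F i i D) : D = ∅ := by
  cases h with
  | empty => rfl
  | single h1 => omega
  | split h1 h2 => omega
  | context hp => obtain ⟨h1, h2, h3, _⟩ := hp; omega

lemma decomp_remove_suffix {i j l : ℕ} {D : Finset Piece} (h : IsPieceDecomp F i j D)
    (hm : Piece.forest l j ∈ D) (hlj : l < j) :
    IsPieceDecomp F i l (D.erase (Piece.forest l j)) := by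
  induction h with
  | empty i => exact absurd hm (Finset.notMem_empty _)
  | @single i j hij hjF hfor =>
      rw [Finset.mem_singleton, Piece.forest.injEq] at hm
      obtain ⟨rfl, -⟩ := hm
      rw [Finset.erase_singleton]
      exact IsPieceDecomp.empty _
  | @split i m j DL DR him hmj hL hR ihL ihR =>
      have hfnL : Piece.forest l j ∉ DL := by
        intro hin
        have := (decomp_pieces hL _ hin).2.1 (by simp [pieceChars, Finset.mem_Ico]; omega :
          j - 1 ∈ pieceChars (Piece.forest l j))
        simp only [Finset.mem_Ico] at this
        omega
      have hfR : Piece.forest l j ∈ DR := by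
        rcases Finset.mem_union.mp hm with h1 | h1
        · exact absurd h1 hfnL
        · exact h1
      have hml : m ≤ l := by
        have := (decomp_pieces hR _ hfR).2.1 (by simp [pieceChars, Finset.mem_Ico]; omega :
          l ∈ pieceChars (Piece.forest l j))
        simp only [Finset.mem_Ico] at this
        omega
      have hih := ihR hfR hlj
      have herase : (DL ∪ DR).erase (Piece.forest l j) = DL ∪ DR.erase (Piece.forest l j) := by
        rw [Finset.erase_union_distrib, Finset.erase_eq_of_notMem hfnL]
      rw [herase]
      rcases eq_or_lt_of_le hml with rfl | hml'
      · rw [decomp_empty_eq hih, Finset.union_empty]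
        exact hL
      · exact .split him hml' hL hih
  | @context i b c j D' hpiece hD' ih =>
      exfalso
      have hfne : Piece.forest l j ≠ Piece.context i b c j := by simp
      have hmem : Piece.forest l j ∈ D' := by
        rcases Finset.mem_insert.mp hm with h1 | h1
        · exact absurd h1 hfne
        · exact h1
      have := (decomp_pieces hD' _ hmem).2.1 (by simp [pieceChars, Finset.mem_Ico]; omega :
        j - 1 ∈ pieceChars (Piece.forest l j))
      simp only [Finset.mem_Ico] at this
      obtain ⟨-, -, hcj, -⟩ := hpiece
      omega

lemma decomp_remove_prefix {i j r : ℕ} {D : Finset Piece} (h : IsPieceDecomp F i j D)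
    (hm : Piece.forest i r ∈ D) (hir : i < r) :
    IsPieceDecomp F r j (D.erase (Piece.forest i r)) := by
  induction h with
  | empty i => exact absurd hm (Finset.notMem_empty _)
  | @single i j hij hjF hfor =>
      rw [Finset.mem_singleton, Piece.forest.injEq] at hm
      obtain ⟨-, rfl⟩ := hm
      rw [Finset.erase_singleton]
      exact IsPieceDecomp.empty _
  | @split i m j DL DR him hmj hL hR ihL ihR =>
      have hfnR : Piece.forest i r ∉ DR := by
        intro hin
        have := (decomp_pieces hR _ hin).2.1 (by simp [pieceChars, Finset.mem_Ico]; omega :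
          i ∈ pieceChars (Piece.forest i r))
        simp only [Finset.mem_Ico] at this
        omega
      have hfL : Piece.forest i r ∈ DL := by
        rcases Finset.mem_union.mp hm with h1 | h1
        · exact h1
        · exact absurd h1 hfnR
      have hrm : r ≤ m := by
        have := (decomp_pieces hL _ hfL).2.1 (by simp [pieceChars, Finset.mem_Ico]; omega :
          r - 1 ∈ pieceChars (Piece.forest i r))
        simp only [Finset.mem_Ico] at this
        omega
      have hih := ihL hfL hir
      have herase : (DL ∪ DR).erase (Piece.forest i r) = DL.erase (Piece.forest i r) ∪ DR := by
        rw [Finset.erase_union_distrib, Finset.erase_eq_of_notMem hfnR]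
      rw [herase]
      rcases eq_or_lt_of_le hrm with rfl | hrm'
      · rw [decomp_empty_eq hih, Finset.empty_union]
        exact hR
      · exact .split hrm' hmj hih hR
  | @context i b c j D' hpiece hD' ih =>
      exfalso
      have hfne : Piece.forest i r ≠ Piece.context i b c j := by simp
      have hmem : Piece.forest i r ∈ D' := by
        rcases Finset.mem_insert.mp hm with h1 | h1
        · exact absurd h1 hfne
        · exact h1
      have := (decomp_pieces hD' _ hmem).2.1 (by simp [pieceChars, Finset.mem_Ico]; omega :
        i ∈ pieceChars (Piece.forest i r))
      simp only [Finset.mem_Ico] at this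
      obtain ⟨hib, -, -, -⟩ := hpiece
      omega

lemma context_not_mem_inner {i b c j : ℕ} {D' : Finset Piece}
    (hD' : IsPieceDecomp F b c D') (hib : i < b) :
    Piece.context i b c j ∉ D' := by
  intro hin
  have := (decomp_pieces hD' _ hin).2.1 (by
    simp only [pieceChars, Finset.mem_union, Finset.mem_Ico]; omega :
    i ∈ pieceChars (Piece.context i b c j))
  simp only [Finset.mem_Ico] at this
  omega

lemma decomp_remove_context {i j b' c' : ℕ} {D : Finset Piece} (h : IsPieceDecomp F i j D)
    (hm : Piece.context i b' c' j ∈ D) (hib' : i < b') (hc'j : c' < j) :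
    IsPieceDecomp F b' c' (D.erase (Piece.context i b' c' j)) := by
  induction h with
  | empty i => exact absurd hm (Finset.notMem_empty _)
  | single hij hjF hfor =>
      rw [Finset.mem_singleton] at hm
      exact absurd hm (by simp)
  | @split i m j DL DR him hmj hL hR ihL ihR =>
      exfalso
      rcases Finset.mem_union.mp hm with h1 | h1
      · have := (decomp_pieces hL _ h1).2.1 (by
          simp only [pieceChars, Finset.mem_union, Finset.mem_Ico]; omega :
          j - 1 ∈ pieceChars (Piece.context i b' c' j))
        simp only [Finset.mem_Ico] at this
        omega
      · have := (decomp_pieces hR _ h1).2.1 (by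
          simp only [pieceChars, Finset.mem_union, Finset.mem_Ico]; omega :
          i ∈ pieceChars (Piece.context i b' c' j))
        simp only [Finset.mem_Ico] at this
        omega
  | @context i b c j D' hpiece hD' ih =>
      obtain ⟨hib, hbc, hcj, hjF, _, _⟩ := hpiece
      have hnotin : Piece.context i b' c' j ∉ D' := by
        intro hin
        have := (decomp_pieces hD' _ hin).2.1 (by
          simp only [pieceChars, Finset.mem_union, Finset.mem_Ico]; omega :
          i ∈ pieceChars (Piece.context i b' c' j))
        simp only [Finset.mem_Ico] at this
        omega
      have heq : Piece.context i b' c' j = Piece.context i b c j := by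
        rcases Finset.mem_insert.mp hm with h1 | h1
        · exact h1
        · exact absurd h1 hnotin
      rw [Piece.context.injEq] at heq
      obtain ⟨-, rfl, rfl, -⟩ := heq
      rw [Finset.erase_insert hnotin]
      exact hD'

end DecompLemmas
section MergeDecomp
variable {α : Type*} {F : List (Paren α)}

lemma forest_mem_bounds {i j : ℕ} {D : Finset Piece} (h : IsPieceDecomp F i j D)
    {l r : ℕ} (hm : Piece.forest l r ∈ D) :
    i ≤ l ∧ l < r ∧ r ≤ j ∧ r ≤ F.length ∧ IsForest (frag F l r) := by
  obtain ⟨hp, hsub, hne⟩ := decomp_pieces h _ hm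
  obtain ⟨x, hx⟩ := hne
  simp only [pieceChars, Finset.mem_Ico] at hx
  have hlr : l < r := by omega
  have h1 := hsub (show l ∈ pieceChars (Piece.forest l r) by
    simp only [pieceChars, Finset.mem_Ico]; omega)
  have h2 := hsub (show r - 1 ∈ pieceChars (Piece.forest l r) by
    simp only [pieceChars, Finset.mem_Ico]; omega)
  simp only [Finset.mem_Ico] at h1 h2
  exact ⟨by omega, hlr, by omega, hp.2.1, hp.2.2⟩

lemma context_mem_bounds {i j : ℕ} {D : Finset Piece} (h : IsPieceDecomp F i j D)
    {a b c d : ℕ} (hm : Piece.context a b c d ∈ D) :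
    i ≤ a ∧ a < b ∧ b ≤ c ∧ c < d ∧ d ≤ j ∧ d ≤ F.length ∧
      IsTree (frag F a d) ∧ IsForest (frag F b c) := by
  obtain ⟨hp, hsub, -⟩ := decomp_pieces h _ hm
  obtain ⟨hab, hbc, hcd, hdF, htree, hfor⟩ := hp
  have h1 := hsub (show a ∈ pieceChars (Piece.context a b c d) by
    simp only [pieceChars, Finset.mem_union, Finset.mem_Ico]; omega)
  have h2 := hsub (show d - 1 ∈ pieceChars (Piece.context a b c d) by
    simp only [pieceChars, Finset.mem_union, Finset.mem_Ico]; omega)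
  simp only [Finset.mem_Ico] at h1 h2
  exact ⟨by omega, hab, hbc, hcd, by omega, hdF, htree, hfor⟩

lemma decomp_not_mem_right {i m j : ℕ} {DL DR : Finset Piece}
    (hL : IsPieceDecomp F i m DL) (hR : IsPieceDecomp F m j DR) {p : Piece}
    (hp : p ∈ DL) : p ∉ DR := by
  intro hin
  obtain ⟨x, hx⟩ := (decomp_pieces hL p hp).2.2
  have h1 := (decomp_pieces hL p hp).2.1 hx
  have h2 := (decomp_pieces hR p hin).2.1 hx
  simp only [Finset.mem_Ico] at h1 h2
  omega

lemma insert_sdiff_union_left {DL DR : Finset Piece} {f f' u : Piece}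
    (hfnR : f ∉ DR) (hf'nR : f' ∉ DR) :
    insert u ((DL ∪ DR) \ {f, f'}) = insert u (DL \ {f, f'}) ∪ DR := by
  ext x
  simp only [Finset.mem_insert, Finset.mem_union, Finset.mem_sdiff, Finset.mem_singleton]
  constructor
  · rintro (rfl | ⟨hx | hx, hne2⟩)
    · exact Or.inl (Or.inl rfl)
    · exact Or.inl (Or.inr ⟨hx, hne2⟩)
    · exact Or.inr hx
  · rintro ((rfl | ⟨hx, hne2⟩) | hx)
    · exact Or.inl rfl
    · exact Or.inr ⟨Or.inl hx, hne2⟩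
    · refine Or.inr ⟨Or.inr hx, ?_⟩
      rintro (rfl | rfl)
      · exact hfnR hx
      · exact hf'nR hx

lemma insert_sdiff_union_right {DL DR : Finset Piece} {f f' u : Piece}
    (hfnL : f ∉ DL) (hf'nL : f' ∉ DL) :
    insert u ((DL ∪ DR) \ {f, f'}) = DL ∪ insert u (DR \ {f, f'}) := by
  ext x
  simp only [Finset.mem_insert, Finset.mem_union, Finset.mem_sdiff, Finset.mem_singleton]
  constructor
  · rintro (rfl | ⟨hx | hx, hne2⟩)
    · exact Or.inr (Or.inl rfl)
    · exact Or.inl hx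
    · exact Or.inr (Or.inr ⟨hx, hne2⟩)
  · rintro (hx | (rfl | ⟨hx, hne2⟩))
    · refine Or.inr ⟨Or.inl hx, ?_⟩
      rintro (rfl | rfl)
      · exact hfnL hx
      · exact hf'nL hx
    · exact Or.inl rfl
    · exact Or.inr ⟨Or.inr hx, hne2⟩

lemma insert_sdiff_mixed {DL DR : Finset Piece} {f f' u : Piece}
    (hfL : f ∈ DL) (hf'R : f' ∈ DR) (hfnR : f ∉ DR) (hf'nL : f' ∉ DL) :
    insert u ((DL ∪ DR) \ {f, f'}) = DL.erase f ∪ ({u} ∪ DR.erase f') := by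
  ext x
  simp only [Finset.mem_insert, Finset.mem_union, Finset.mem_sdiff, Finset.mem_singleton,
    Finset.mem_erase]
  constructor
  · rintro (rfl | ⟨hx | hx, hne2⟩)
    · exact Or.inr (Or.inl rfl)
    · exact Or.inl ⟨fun h => hne2 (Or.inl h), hx⟩
    · exact Or.inr (Or.inr ⟨fun h => hne2 (Or.inr h), hx⟩)
  · rintro (⟨hne2, hx⟩ | (rfl | ⟨hne2, hx⟩))
    · refine Or.inr ⟨Or.inl hx, ?_⟩
      rintro (rfl | rfl)
      · exact hne2 rfl
      · exact hf'nL hx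
    · exact Or.inl rfl
    · refine Or.inr ⟨Or.inr hx, ?_⟩
      rintro (rfl | rfl)
      · exact hfnR hx
      · exact hne2 rfl

lemma insert_sdiff_ctx_pair {D' : Finset Piece} {ctx f' u : Piece} (hctx : ctx ∉ D')
    (hne : ctx ≠ f') :
    insert u ((insert ctx D') \ {ctx, f'}) = insert u (D'.erase f') := by
  ext x
  simp only [Finset.mem_insert, Finset.mem_sdiff, Finset.mem_singleton, Finset.mem_erase]
  constructor
  · rintro (rfl | ⟨(rfl | hx), hne2⟩)
    · exact Or.inl rfl
    · exact absurd (Or.inl rfl) hne2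
    · exact Or.inr ⟨fun h => hne2 (Or.inr h), hx⟩
  · rintro (rfl | ⟨hne2, hx⟩)
    · exact Or.inl rfl
    · refine Or.inr ⟨Or.inr hx, ?_⟩
      rintro (rfl | rfl)
      · exact hctx hx
      · exact hne2 rfl

lemma insert_sdiff_ctx_keep {D' : Finset Piece} {ctx f f' u : Piece} (hctx : ctx ∉ D')
    (hf : f ∈ D') (hf' : f' ∈ D') :
    insert u ((insert ctx D') \ {f, f'}) = insert ctx (insert u (D' \ {f, f'})) := by
  ext x
  simp only [Finset.mem_insert, Finset.mem_sdiff, Finset.mem_singleton]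
  constructor
  · rintro (rfl | ⟨(rfl | hx), hne2⟩)
    · exact Or.inr (Or.inl rfl)
    · exact Or.inl rfl
    · exact Or.inr (Or.inr ⟨hx, hne2⟩)
  · rintro (rfl | (rfl | ⟨hx, hne2⟩))
    · refine Or.inr ⟨Or.inl rfl, ?_⟩
      rintro (rfl | rfl)
      · exact hctx hf
      · exact hctx hf'
    · exact Or.inl rfl
    · exact Or.inr ⟨Or.inr hx, hne2⟩

lemma decomp_merge {i j : ℕ} {D : Finset Piece} (h : IsPieceDecomp F i j D)
    {f f' u : Piece} (hf : f ∈ D) (hf' : f' ∈ D) (hne : f ≠ f')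
    (hadj : AdjacentUnion f f' u) :
    IsPieceDecomp F i j (insert u (D \ {f, f'})) := by
  revert hf hf'
  induction h with
  | empty i => intro hf _; exact absurd hf (Finset.notMem_empty _)
  | single _ _ _ =>
      intro hf hf'
      rw [Finset.mem_singleton] at hf hf'
      exact absurd (hf.trans hf'.symm) hne
  | @split i m j DL DR him hmj hL hR ihL ihR =>
      intro hf hf'
      rcases Finset.mem_union.mp hf with hfL | hfR <;>
        rcases Finset.mem_union.mp hf' with hf'L | hf'R
      · -- both in DL
        rw [insert_sdiff_union_left (decomp_not_mem_right hL hR hfL)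
          (decomp_not_mem_right hL hR hf'L)]
        exact .split him hmj (ihL hfL hf'L) hR
      · -- f in DL, f' in DR : the crossing case
        have hfnR := decomp_not_mem_right hL hR hfL
        have hf'nL : f' ∉ DL := fun hin => decomp_not_mem_right hL hR hin hf'R
        rcases f with ⟨l, r⟩ | ⟨a, b, c, d⟩
        · rcases f' with ⟨l', r'⟩ | ⟨a', b', c', d'⟩
          · -- forest / forest crossing
            obtain ⟨rfl, rfl⟩ := hadj
            obtain ⟨hil, hlr, hrm, -, hfor1⟩ := forest_mem_bounds hL hfL
            obtain ⟨hmr, hrr', hr'j, hr'F, hfor2⟩ := forest_mem_bounds hR hf'R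
            have hrmeq : r = m := le_antisymm hrm hmr
            subst hrmeq
            have hA := decomp_remove_suffix hL hfL hlr
            have hA' := decomp_remove_prefix hR hf'R hrr'
            have hforu : IsForest (frag F l r') := by
              rw [← frag_append F (le_of_lt hlr) (le_of_lt hrr')]
              exact .append hfor1 hfor2
            have hmid : IsPieceDecomp F l r' {Piece.forest l r'} :=
              .single (hlr.trans hrr') hr'F hforu
            have hright : IsPieceDecomp F l j ({Piece.forest l r'} ∪
                DR.erase (Piece.forest r r')) := by
              rcases eq_or_lt_of_le hr'j with rfl | hr'j'
              · rw [decomp_empty_eq hA', Finset.union_empty]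
                exact hmid
              · exact .split (hlr.trans hrr') hr'j' hmid hA'
            have htot : IsPieceDecomp F i j (DL.erase (Piece.forest l r) ∪
                ({Piece.forest l r'} ∪ DR.erase (Piece.forest r r'))) := by
              rcases eq_or_lt_of_le hil with rfl | hil'
              · rw [decomp_empty_eq hA, Finset.empty_union]
                exact hright
              · exact .split hil' (lt_of_lt_of_le (hlr.trans hrr') hr'j) hA hright
            rw [insert_sdiff_mixed hfL hf'R hfnR hf'nL]
            exact htot
          · simp only [AdjacentUnion] at hadj
        · -- f is a context: f' must live inside its hole, contradiction with sides
          exfalso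
          obtain ⟨-, hab, hbc, hcd, hdm, -, -, -⟩ := context_mem_bounds hL hfL
          rcases f' with ⟨l', r'⟩ | ⟨a', b', c', d'⟩
          · obtain ⟨hml', hl'r', -, -, -⟩ := forest_mem_bounds hR hf'R
            rcases hadj with ⟨hbl, -, -⟩ | ⟨hbl, -, -⟩ | ⟨hcr, -, -⟩
            · omega
            · omega
            · omega
          · obtain ⟨hma', ha'b', -, -, -, -, -, -⟩ := context_mem_bounds hR hf'R
            obtain ⟨hba', -, -⟩ := hadj
            omega
      · -- f in DR, f' in DL : impossible
        exfalso
        have hfnL : f ∉ DL := fun hin => decomp_not_mem_right hL hR hin hfR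
        rcases f with ⟨l, r⟩ | ⟨a, b, c, d⟩
        · rcases f' with ⟨l', r'⟩ | ⟨a', b', c', d'⟩
          · obtain ⟨rfl, -⟩ := hadj
            obtain ⟨hml, hlr, -, -, -⟩ := forest_mem_bounds hR hfR
            obtain ⟨-, hl'r', hr'm, -, -⟩ := forest_mem_bounds hL hf'L
            omega
          · simp only [AdjacentUnion] at hadj
        · obtain ⟨hma, hab, hbc, hcd, -, -, -, -⟩ := context_mem_bounds hR hfR
          rcases f' with ⟨l', r'⟩ | ⟨a', b', c', d'⟩
          · obtain ⟨-, hl'r', hr'm, -, -⟩ := forest_mem_bounds hL hf'L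
            rcases hadj with ⟨hbl, -, -⟩ | ⟨hbl, -, -⟩ | ⟨hcr, -, -⟩
            · omega
            · omega
            · omega
          · obtain ⟨-, ha'b', hb'c', hc'd', hd'm, -, -, -⟩ := context_mem_bounds hL hf'L
            obtain ⟨hba', -, -⟩ := hadj
            omega
      · -- both in DR
        rw [insert_sdiff_union_right (fun hin => decomp_not_mem_right hL hR hin hfR)
          (fun hin => decomp_not_mem_right hL hR hin hf'R)]
        exact .split him hmj hL (ihR hfR hf'R)
  | @context i b c j D' hpiece hD' ih =>
      intro hf hf'
      obtain ⟨hib, hbc, hcj, hjF, htree, hforhole⟩ := hpiece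
      have hctxnotin : Piece.context i b c j ∉ D' := context_not_mem_inner hD' hib
      rcases Finset.mem_insert.mp hf with hfc | hfD <;>
        rcases Finset.mem_insert.mp hf' with hf'c | hf'D
      · exact absurd (hfc.trans hf'c.symm) hne
      · -- f is the outer context, f' inside the hole
        subst hfc
        rcases f' with ⟨l', r'⟩ | ⟨a', b', c', d'⟩
        · obtain ⟨hbl', hl'r', hr'c, hr'F, hforf'⟩ := forest_mem_bounds hD' hf'D
          rcases hadj with ⟨hbl, hcr, rfl⟩ | ⟨hbl, hcr, rfl⟩ | ⟨hcr, hbl, rfl⟩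
          · -- u = forest i j
            subst hbl; subst hcr
            have hrem := decomp_remove_suffix hD' hf'D hl'r'
            rw [insert_sdiff_ctx_pair hctxnotin (by simp), decomp_empty_eq hrem]
            have : insert (Piece.forest i j) (∅ : Finset Piece) = {Piece.forest i j} := rfl
            rw [this]
            exact .single (by omega) hjF htree.isForest
          · -- u = context i r' c j
            subst hbl
            have hrem := decomp_remove_prefix hD' hf'D hl'r'
            have hpiece2 : IsPiece F (Piece.context i r' c j) :=
              ⟨by omega, hr'c, hcj, hjF, htree, decomp_forest hrem⟩
            rw [insert_sdiff_ctx_pair hctxnotin (by simp)]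
            exact .context hpiece2 hrem
          · -- u = context i b l' j
            subst hcr
            have hrem := decomp_remove_suffix hD' hf'D hl'r'
            have hpiece2 : IsPiece F (Piece.context i b l' j) :=
              ⟨hib, hbl', by omega, hjF, htree, decomp_forest hrem⟩
            rw [insert_sdiff_ctx_pair hctxnotin (by simp)]
            exact .context hpiece2 hrem
        · -- two nested contexts
          obtain ⟨hba', ha'b', hb'c', hc'd', hd'c, -, -, hforf'⟩ := context_mem_bounds hD' hf'D
          obtain ⟨rfl, rfl, rfl⟩ := hadj
          obtain ⟨-, -, -, -, -, -, -, hforf'2⟩ := context_mem_bounds hD' hf'D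
          have hrem := decomp_remove_context hD' hf'D ha'b' hc'd'
          have hpiece2 : IsPiece F (Piece.context i b' c' j) :=
            ⟨by omega, hb'c', by omega, hjF, htree, hforf'2⟩
          rw [insert_sdiff_ctx_pair hctxnotin (by simp; omega)]
          exact .context hpiece2 hrem
      · -- f inside hole, f' the outer context: impossible
        exfalso
        subst hf'c
        rcases f with ⟨l, r⟩ | ⟨a', b', c', d'⟩
        · simp only [AdjacentUnion] at hadj
        · obtain ⟨hba', ha'b', -, -, -, -, -, -⟩ := context_mem_bounds hD' hfD
          obtain ⟨hb'i, -, -⟩ := hadj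
          omega
      · -- both inside the hole
        rw [insert_sdiff_ctx_keep hctxnotin hfD hf'D]
        exact .context ⟨hib, hbc, hcj, hjF, htree, hforhole⟩ (ih hfD hf'D)

end MergeDecomp
section AlignLemmas
variable {α : Type*}

lemma path_mono {path : List (ℕ × ℕ)} (h : path.Chain' AlignStep) :
    ∀ {t s : ℕ} {p q : ℕ × ℕ}, t ≤ s → path[t]? = some p → path[s]? = some q →
      p.1 ≤ q.1 ∧ p.2 ≤ q.2 := by
  intro t s
  induction s with
  | zero =>
      intro p q hts hp hq
      have : t = 0 := Nat.le_zero.mp hts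
      subst this
      rw [hp] at hq
      cases hq
      exact ⟨le_rfl, le_rfl⟩
  | succ s ih =>
      intro p q hts hp hq
      rcases Nat.lt_or_ge t (s+1) with hlt | hge
      · have hts' : t ≤ s := by omega
        have hslen : s + 1 < path.length := by
          by_contra hcon
          rw [List.getElem?_eq_none (by omega)] at hq
          cases hq
        have hq' : path[s]? = some path[s] := List.getElem?_eq_getElem (by omega)
        have hstep : AlignStep path[s] q := by
          have hc := List.isChain_iff_getElem.mp h s (by omega)
          have h2 : path[s+1] = q := by
            have h3 := List.getElem?_eq_getElem hslen
            rw [h3] at hq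
            exact Option.some.inj hq
          rwa [h2] at hc
        have hih := ih hts' hp hq'
        rcases hstep with h1 | h1 | h1 <;> rw [h1] <;> simp <;> omega
      · have : t = s + 1 := by omega
        subst this
        rw [hp] at hq
        cases hq
        exact ⟨le_rfl, le_rfl⟩

lemma aligns_order {path : List (ℕ × ℕ)} (hch : path.Chain' AlignStep)
    {x y x' y' : ℕ} (h1 : AlignsAt path x y) (h2 : AlignsAt path x' y') :
    (x = x' ∧ y = y') ∨ (x + 1 ≤ x' ∧ y + 1 ≤ y') ∨ (x' + 1 ≤ x ∧ y' + 1 ≤ y) := by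
  obtain ⟨t, ht, ht1⟩ := h1
  obtain ⟨s, hs, hs1⟩ := h2
  rcases lt_trichotomy t s with h | rfl | h
  · right; left
    have := path_mono hch (show t + 1 ≤ s by omega) ht1 hs
    simpa using this
  · rw [ht] at hs
    cases hs
    exact Or.inl ⟨rfl, rfl⟩
  · right; right
    have := path_mono hch (show s + 1 ≤ t by omega) hs1 ht
    simpa using this

lemma squeeze_G {path : List (ℕ × ℕ)} (hch : path.Chain' AlignStep)
    {x1 y1 x2 y2 z x : ℕ} (h1 : AlignsAt path x1 y1) (h2 : AlignsAt path x2 y2)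
    (hx : x2 ≤ x1 + 1) (hz1 : y1 < z) (hz2 : z < y2) (ha : AlignsAt path x z) : False := by
  rcases aligns_order hch h1 ha with ⟨e1, e2⟩ | ⟨e1, e2⟩ | ⟨e1, e2⟩ <;>
    rcases aligns_order hch ha h2 with ⟨f1, f2⟩ | ⟨f1, f2⟩ | ⟨f1, f2⟩ <;> omega

lemma squeeze_F {path : List (ℕ × ℕ)} (hch : path.Chain' AlignStep)
    {x1 y1 x2 y2 z y : ℕ} (h1 : AlignsAt path x1 y1) (h2 : AlignsAt path x2 y2)
    (hy : y2 ≤ y1 + 1) (hz1 : x1 < z) (hz2 : z < x2) (ha : AlignsAt path z y) : False := by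
  rcases aligns_order hch h1 ha with ⟨e1, e2⟩ | ⟨e1, e2⟩ | ⟨e1, e2⟩ <;>
    rcases aligns_order hch ha h2 with ⟨f1, f2⟩ | ⟨f1, f2⟩ | ⟨f1, f2⟩ <;> omega

lemma matched_aligns_G {F G : List (Paren α)} {path : List (ℕ × ℕ)} {p1 p2 : Piece}
    (hm : MatchesPerfectly F G path p1 p2) {z : ℕ} (hz : z ∈ pieceChars p2) :
    ∃ x, AlignsAt path x z := by
  rcases p1 with ⟨l, r⟩ | ⟨a, b, c, d⟩ <;> rcases p2 with ⟨l', r'⟩ | ⟨a', b', c', d'⟩ <;>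
    simp only [MatchesPerfectly] at hm
  · obtain ⟨hlen, -, hal⟩ := hm
    simp only [pieceChars, Finset.mem_Ico] at hz
    have h := hal (z - l') (by omega)
    rw [show l' + (z - l') = z by omega] at h
    exact ⟨_, h⟩
  · obtain ⟨hlen1, hlen2, -, -, hal1, hal2⟩ := hm
    simp only [pieceChars, Finset.mem_union, Finset.mem_Ico] at hz
    rcases hz with hz | hz
    · have h := hal1 (z - a') (by omega)
      rw [show a' + (z - a') = z by omega] at h
      exact ⟨_, h⟩
    · have h := hal2 (z - c') (by omega)
      rw [show c' + (z - c') = z by omega] at h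
      exact ⟨_, h⟩

lemma matched_aligns_F {F G : List (Paren α)} {path : List (ℕ × ℕ)} {p1 p2 : Piece}
    (hm : MatchesPerfectly F G path p1 p2) {z : ℕ} (hz : z ∈ pieceChars p1) :
    ∃ y, AlignsAt path z y := by
  rcases p1 with ⟨l, r⟩ | ⟨a, b, c, d⟩ <;> rcases p2 with ⟨l', r'⟩ | ⟨a', b', c', d'⟩ <;>
    simp only [MatchesPerfectly] at hm
  · obtain ⟨hlen, -, hal⟩ := hm
    simp only [pieceChars, Finset.mem_Ico] at hz
    have h := hal (z - l) (by omega)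
    rw [show l + (z - l) = z by omega] at h
    exact ⟨_, h⟩
  · obtain ⟨hlen1, hlen2, -, -, hal1, hal2⟩ := hm
    simp only [pieceChars, Finset.mem_union, Finset.mem_Ico] at hz
    rcases hz with hz | hz
    · have h := hal1 (z - a) (by omega)
      rw [show a + (z - a) = z by omega] at h
      exact ⟨_, h⟩
    · have h := hal2 (z - c) (by omega)
      rw [show c + (z - c) = z by omega] at h
      exact ⟨_, h⟩

end AlignLemmas

section MatchingMerge
variable {α : Type*} {F G : List (Paren α)}

/-- Generic merging of two matched clean pieces, given all the piece-specific data. -/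
lemma matching_merge {k : ℕ} {M : Finset (Piece × Piece)} {D : Finset Piece}
    (hvalid : ∀ p ∈ M, IsPiece F p.1 ∧ IsPiece G p.2)
    (hdisj : ∀ p ∈ M, ∀ q ∈ M, p ≠ q → Disjoint (pieceChars p.1) (pieceChars q.1))
    {path : List (ℕ × ℕ)}
    (halign : IsAlignment 0 F.length 0 G.length path) (hcons : Consistent F G path)
    (hwidth : WidthLE (2 * k) path)
    (hmatch : ∀ p ∈ M, MatchesPerfectly F G path p.1 p.2)
    (hMD : ∀ p ∈ M, p.1 ∈ D)
    (hD : IsPieceDecomp F 0 F.length D)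
    {f f' g g' u v : Piece} (hfg : (f, g) ∈ M) (hf'g' : (f', g') ∈ M)
    (hfD : f ∈ D) (hf'D : f' ∈ D)
    (hcu : pieceChars u = pieceChars f ∪ pieceChars f')
    (hcv : pieceChars v = pieceChars g ∪ pieceChars g')
    (hPu : IsPiece F u) (hPv : IsPiece G v)
    (hcfF : ∀ p < F.length, posAdjacent f p → ∃ q ∈ M, p ∈ pieceChars q.1)
    (hcfG : ∀ p < G.length, posAdjacent g p → ∃ q ∈ M, p ∈ pieceChars q.2)
    (hcf'F : ∀ p < F.length, posAdjacent f' p → ∃ q ∈ M, p ∈ pieceChars q.1)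
    (hcf'G : ∀ p < G.length, posAdjacent g' p → ∃ q ∈ M, p ∈ pieceChars q.2)
    (hmuv : MatchesPerfectly F G path u v) :
    IsPieceMatching k F G (insert (u, v) (M \ {(f, g), (f', g')})) ∧
    (∀ p ∈ insert (u, v) (M \ {(f, g), (f', g')}), p.1 ∈ insert u (D \ {f, f'})) ∧
    CleanPiece F G (insert (u, v) (M \ {(f, g), (f', g')})) u ∧
    (∀ h ∈ D \ ({f, f'} : Finset Piece), CleanPiece F G M h →
      CleanPiece F G (insert (u, v) (M \ {(f, g), (f', g')})) h) := by
  set M' := insert (u, v) (M \ {(f, g), (f', g')}) with hM'def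
  have hmemM' : ∀ p ∈ M', p = (u, v) ∨ (p ∈ M ∧ p ≠ (f, g) ∧ p ≠ (f', g')) := by
    intro p hp
    rcases Finset.mem_insert.mp hp with h | h
    · exact Or.inl h
    · rw [Finset.mem_sdiff] at h
      refine Or.inr ⟨h.1, ?_, ?_⟩
      · intro hx; exact h.2 (by rw [hx]; simp)
      · intro hx; exact h.2 (by rw [hx]; simp)
  have hdisju : ∀ q ∈ M, q ≠ (f, g) → q ≠ (f', g') →
      Disjoint (pieceChars u) (pieceChars q.1) := by
    intro q hq hq1 hq2
    rw [hcu, Finset.disjoint_union_left]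
    exact ⟨hdisj (f, g) hfg q hq (fun h => hq1 h.symm),
      hdisj (f', g') hf'g' q hq (fun h => hq2 h.symm)⟩
  have hvalid' : ∀ p ∈ M', IsPiece F p.1 ∧ IsPiece G p.2 := by
    intro p hp
    rcases hmemM' p hp with rfl | ⟨hpM, -, -⟩
    · exact ⟨hPu, hPv⟩
    · exact hvalid p hpM
  have hdisj' : ∀ p ∈ M', ∀ q ∈ M', p ≠ q → Disjoint (pieceChars p.1) (pieceChars q.1) := by
    intro p hp q hq hpq
    rcases hmemM' p hp with rfl | ⟨hpM, hp1, hp2⟩ <;>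
      rcases hmemM' q hq with rfl | ⟨hqM, hq1, hq2⟩
    · exact absurd rfl hpq
    · exact hdisju q hqM hq1 hq2
    · exact (hdisju p hpM hp1 hp2).symm
    · exact hdisj p hpM q hqM hpq
  have hmatch' : ∀ p ∈ M', MatchesPerfectly F G path p.1 p.2 := by
    intro p hp
    rcases hmemM' p hp with rfl | ⟨hpM, -, -⟩
    · exact hmuv
    · exact hmatch p hpM
  have hfne : (pieceChars f).Nonempty := (decomp_pieces hD f hfD).2.2
  have hf'ne : (pieceChars f').Nonempty := (decomp_pieces hD f' hf'D).2.2
  have hMD' : ∀ p ∈ M', p.1 ∈ insert u (D \ {f, f'}) := by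
    intro p hp
    rcases hmemM' p hp with rfl | ⟨hpM, hp1, hp2⟩
    · exact Finset.mem_insert_self _ _
    · refine Finset.mem_insert_of_mem (Finset.mem_sdiff.mpr ⟨hMD p hpM, ?_⟩)
      intro hmem
      rcases Finset.mem_insert.mp hmem with h | h
      · have hd := hdisj p hpM (f, g) hfg hp1
        rw [h] at hd
        obtain ⟨x, hx⟩ := hfne
        exact Finset.disjoint_left.mp hd hx hx
      · rw [Finset.mem_singleton] at h
        have hd := hdisj p hpM (f', g') hf'g' hp2
        rw [h] at hd
        obtain ⟨x, hx⟩ := hf'ne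
        exact Finset.disjoint_left.mp hd hx hx
  have hcleanu : CleanPiece F G M' u := by
    refine ⟨v, Finset.mem_insert_self _ _, ?_, ?_⟩
    · intro p hp hadjp
      obtain ⟨hnotin, hside⟩ := hadjp
      rw [hcu] at hnotin
      have hfadj : posAdjacent f p ∨ posAdjacent f' p := by
        rcases hside with hs | ⟨q0, hq0, rfl⟩
        · rw [hcu, Finset.mem_union] at hs
          rcases hs with hs | hs
          · exact Or.inl ⟨fun hc => hnotin (Finset.mem_union_left _ hc), Or.inl hs⟩
          · exact Or.inr ⟨fun hc => hnotin (Finset.mem_union_right _ hc), Or.inl hs⟩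
        · rw [hcu, Finset.mem_union] at hq0
          rcases hq0 with hs | hs
          · exact Or.inl ⟨fun hc => hnotin (Finset.mem_union_left _ hc), Or.inr ⟨q0, hs, rfl⟩⟩
          · exact Or.inr ⟨fun hc => hnotin (Finset.mem_union_right _ hc), Or.inr ⟨q0, hs, rfl⟩⟩
      have hget : ∃ q ∈ M, p ∈ pieceChars q.1 := by
        rcases hfadj with h | h
        · exact hcfF p hp h
        · exact hcf'F p hp h
      obtain ⟨q, hqM, hpq⟩ := hget
      by_cases h1 : q = (f, g)
      · subst h1
        exact absurd (Finset.mem_union_left _ hpq) hnotin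
      by_cases h2 : q = (f', g')
      · subst h2
        exact absurd (Finset.mem_union_right _ hpq) hnotin
      exact ⟨q, Finset.mem_insert_of_mem (Finset.mem_sdiff.mpr ⟨hqM, by simp [h1, h2]⟩), hpq⟩
    · intro p hp hadjp
      obtain ⟨hnotin, hside⟩ := hadjp
      rw [hcv] at hnotin
      have hgadj : posAdjacent g p ∨ posAdjacent g' p := by
        rcases hside with hs | ⟨q0, hq0, rfl⟩
        · rw [hcv, Finset.mem_union] at hs
          rcases hs with hs | hs
          · exact Or.inl ⟨fun hc => hnotin (Finset.mem_union_left _ hc), Or.inl hs⟩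
          · exact Or.inr ⟨fun hc => hnotin (Finset.mem_union_right _ hc), Or.inl hs⟩
        · rw [hcv, Finset.mem_union] at hq0
          rcases hq0 with hs | hs
          · exact Or.inl ⟨fun hc => hnotin (Finset.mem_union_left _ hc), Or.inr ⟨q0, hs, rfl⟩⟩
          · exact Or.inr ⟨fun hc => hnotin (Finset.mem_union_right _ hc), Or.inr ⟨q0, hs, rfl⟩⟩
      have hget : ∃ q ∈ M, p ∈ pieceChars q.2 := by
        rcases hgadj with h | h
        · exact hcfG p hp h
        · exact hcf'G p hp h
      obtain ⟨q, hqM, hpq⟩ := hget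
      by_cases h1 : q = (f, g)
      · subst h1
        exact absurd (Finset.mem_union_left _ hpq) hnotin
      by_cases h2 : q = (f', g')
      · subst h2
        exact absurd (Finset.mem_union_right _ hpq) hnotin
      exact ⟨q, Finset.mem_insert_of_mem (Finset.mem_sdiff.mpr ⟨hqM, by simp [h1, h2]⟩), hpq⟩
  have hpres : ∀ h ∈ D \ ({f, f'} : Finset Piece), CleanPiece F G M h →
      CleanPiece F G M' h := by
    intro h hhD hch
    obtain ⟨gh, hghM, hhF, hhG⟩ := hch
    rw [Finset.mem_sdiff] at hhD
    have hhf : h ≠ f := fun hx => hhD.2 (by rw [hx]; simp)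
    have hhf' : h ≠ f' := fun hx => hhD.2 (by rw [hx]; simp)
    refine ⟨gh, ?_, ?_, ?_⟩
    · refine Finset.mem_insert_of_mem (Finset.mem_sdiff.mpr ⟨hghM, ?_⟩)
      intro hmem
      rcases Finset.mem_insert.mp hmem with hx | hx
      · exact hhf (congrArg Prod.fst hx)
      · rw [Finset.mem_singleton] at hx
        exact hhf' (congrArg Prod.fst hx)
    · intro p hp hadjp
      obtain ⟨q, hqM, hpq⟩ := hhF p hp hadjp
      by_cases h1 : q = (f, g)
      · subst h1
        exact ⟨(u, v), Finset.mem_insert_self _ _, by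
          rw [hcu]; exact Finset.mem_union_left _ hpq⟩
      by_cases h2 : q = (f', g')
      · subst h2
        exact ⟨(u, v), Finset.mem_insert_self _ _, by
          rw [hcu]; exact Finset.mem_union_right _ hpq⟩
      exact ⟨q, Finset.mem_insert_of_mem (Finset.mem_sdiff.mpr ⟨hqM, by simp [h1, h2]⟩), hpq⟩
    · intro p hp hadjp
      obtain ⟨q, hqM, hpq⟩ := hhG p hp hadjp
      by_cases h1 : q = (f, g)
      · subst h1
        exact ⟨(u, v), Finset.mem_insert_self _ _, by
          rw [hcv]; exact Finset.mem_union_left _ hpq⟩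
      by_cases h2 : q = (f', g')
      · subst h2
        exact ⟨(u, v), Finset.mem_insert_self _ _, by
          rw [hcv]; exact Finset.mem_union_right _ hpq⟩
      exact ⟨q, Finset.mem_insert_of_mem (Finset.mem_sdiff.mpr ⟨hqM, by simp [h1, h2]⟩), hpq⟩
  exact ⟨⟨hvalid', hdisj', path, halign, hcons, hwidth, hmatch'⟩, hMD', hcleanu, hpres⟩

end MatchingMerge
section FinalParts
variable {α : Type*}

lemma adjacent_iff_shape (f f' : Piece) :
    Adjacent f f' ↔
      ((∃ l r r', f = Piece.forest l r ∧ f' = Piece.forest r r') ∨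
       (∃ a b c d, f = Piece.context a b c d ∧
          ((∃ r', f' = Piece.forest b r') ∨ (∃ l', f' = Piece.forest l' c))) ∨
       (∃ a b c d b' c', f = Piece.context a b c d ∧ f' = Piece.context b b' c' c)) := by
  constructor
  · rintro ⟨u, hu⟩
    rcases f with ⟨l, r⟩ | ⟨a, b, c, d⟩ <;> rcases f' with ⟨l', r'⟩ | ⟨a', b', c', d'⟩
    · obtain ⟨rfl, -⟩ := hu
      exact Or.inl ⟨l, r, r', rfl, rfl⟩
    · simp only [AdjacentUnion] at hu
    · rcases hu with ⟨rfl, rfl, -⟩ | ⟨rfl, -, -⟩ | ⟨rfl, -, -⟩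
      · exact Or.inr (Or.inl ⟨a, b, c, d, rfl, Or.inl ⟨c, rfl⟩⟩)
      · exact Or.inr (Or.inl ⟨a, b, c, d, rfl, Or.inl ⟨r', rfl⟩⟩)
      · exact Or.inr (Or.inl ⟨a, b, c, d, rfl, Or.inr ⟨l', rfl⟩⟩)
    · obtain ⟨rfl, rfl, -⟩ := hu
      exact Or.inr (Or.inr ⟨a, b, c, d, b', c', rfl, rfl⟩)
  · rintro (⟨l, r, r', rfl, rfl⟩ | ⟨a, b, c, d, rfl, (⟨r', rfl⟩ | ⟨l', rfl⟩)⟩ |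
      ⟨a, b, c, d, b', c', rfl, rfl⟩)
    · exact ⟨.forest l r', rfl, rfl⟩
    · by_cases hc : c = r'
      · exact ⟨.forest a d, Or.inl ⟨rfl, hc, rfl⟩⟩
      · exact ⟨.context a r' c d, Or.inr (Or.inl ⟨rfl, hc, rfl⟩)⟩
    · by_cases hb : b = l'
      · subst hb
        exact ⟨.forest a d, Or.inl ⟨rfl, rfl, rfl⟩⟩
      · exact ⟨.context a b l' d, Or.inr (Or.inr ⟨rfl, hb, rfl⟩)⟩
    · exact ⟨.context a b' c' d, rfl, rfl, rfl⟩

end FinalParts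
section Part3
variable {α : Type*}

lemma part3_main (k : ℕ) (F G : List (Paren α)) (D : Finset Piece)
    (hD : IsPieceDecomp F 0 F.length D)
    (f f' : Piece) (hf : f ∈ D) (hf' : f' ∈ D) (hne : f ≠ f') :
    ∀ M : Finset (Piece × Piece), IsPieceMatching k F G M → (∀ p ∈ M, p.1 ∈ D) →
      CleanPiece F G M f → CleanPiece F G M f' →
      ∀ u, AdjacentUnion f f' u →
      ∃ g g' v, (f, g) ∈ M ∧ (f', g') ∈ M ∧ AdjacentUnion g g' v ∧
        IsPieceMatching k F G (insert (u, v) (M \ {(f, g), (f', g')})) ∧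
        (∀ p ∈ insert (u, v) (M \ {(f, g), (f', g')}), p.1 ∈ insert u (D \ {f, f'})) ∧
        CleanPiece F G (insert (u, v) (M \ {(f, g), (f', g')})) u ∧
        (∀ h ∈ D \ ({f, f'} : Finset Piece), CleanPiece F G M h →
          CleanPiece F G (insert (u, v) (M \ {(f, g), (f', g')})) h) := by
  intro M hM hMD hcf hcf' u hadj
  obtain ⟨hvalid, hdisj, path, halign, hcons, hwidth, hmatch⟩ := hM
  obtain ⟨g, hgM, hcfF, hcfG⟩ := hcf
  obtain ⟨g', hg'M, hcf'F, hcf'G⟩ := hcf'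
  have hch : path.Chain' AlignStep := halign.2.2
  have hmf := hmatch (f, g) hgM
  have hmf' := hmatch (f', g') hg'M
  have hDec' := decomp_merge hD hf hf' hne hadj
  have hPu : IsPiece F u := (decomp_pieces hDec' u (Finset.mem_insert_self _ _)).1
  have hdisjff' : Disjoint (pieceChars f) (pieceChars f') := decomp_disjoint hD f hf f' hf' hne
  rcases f with ⟨l, r⟩ | ⟨a, b, c, d⟩
  · rcases f' with ⟨l', r'⟩ | ⟨a', b', c', d'⟩
    · -- Case I : two forests
      obtain ⟨rfl, rfl⟩ := hadj
      obtain ⟨-, hlr, -, hrF, hforf⟩ := forest_mem_bounds hD hf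
      obtain ⟨-, hrr', -, hr'F, hforf'⟩ := forest_mem_bounds hD hf'
      rcases g with ⟨l2, r2⟩ | ⟨a2, b2, c2, d2⟩
      swap
      · simp only [MatchesPerfectly] at hmf
      rcases g' with ⟨l2', r2'⟩ | ⟨a2', b2', c2', d2'⟩
      swap
      · simp only [MatchesPerfectly] at hmf'
      obtain ⟨hlen, hfrag, hal⟩ := hmf
      obtain ⟨hlen', hfrag', hal'⟩ := hmf'
      obtain ⟨hl2r2, hr2G, hforg⟩ := (hvalid _ hgM).2
      obtain ⟨hl2'r2', hr2'G, hforg'⟩ := (hvalid _ hg'M).2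
      have hl2r2' : l2 < r2 := by omega
      have hl2'r2'' : l2' < r2' := by omega
      have h1 : AlignsAt path (r - 1) (r2 - 1) := by
        have h := hal (r - 1 - l) (by omega)
        rwa [show l + (r - 1 - l) = r - 1 by omega, show l2 + (r - 1 - l) = r2 - 1 by omega] at h
      have h2 : AlignsAt path r l2' := by
        have h := hal' 0 (by omega)
        simpa using h
      have hord1 : r2 ≤ l2' := by
        rcases aligns_order hch h1 h2 with ⟨e1, e2⟩ | ⟨e1, e2⟩ | ⟨e1, e2⟩ <;> omega
      have hr2l2' : r2 = l2' := by
        by_contra hne3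
        have hlt : r2 < l2' := by omega
        have hpos : posAdjacent (Piece.forest l2 r2) r2 := by
          refine ⟨by simp only [pieceChars, Finset.mem_Ico]; omega,
            Or.inr ⟨r2 - 1, by simp only [pieceChars, Finset.mem_Ico]; omega, by omega⟩⟩
        obtain ⟨q, hqM, hq2⟩ := hcfG r2 (by omega) hpos
        obtain ⟨x, hx⟩ := matched_aligns_G (hmatch q hqM) hq2
        exact squeeze_G hch h1 h2 (by omega) (by omega) hlt hx
      subst hr2l2'
      refine ⟨Piece.forest l2 r2, Piece.forest r2 r2', Piece.forest l2 r2', hgM, hg'M,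
        ⟨rfl, rfl⟩, ?_⟩
      have hcu : pieceChars (Piece.forest l r') =
          pieceChars (Piece.forest l r) ∪ pieceChars (Piece.forest r r') := by
        ext x
        simp only [pieceChars, Finset.mem_union, Finset.mem_Ico]
        omega
      have hcv : pieceChars (Piece.forest l2 r2') =
          pieceChars (Piece.forest l2 r2) ∪ pieceChars (Piece.forest r2 r2') := by
        ext x
        simp only [pieceChars, Finset.mem_union, Finset.mem_Ico]
        omega
      have hPv : IsPiece G (Piece.forest l2 r2') := by
        refine ⟨by omega, hr2'G, ?_⟩
        rw [← frag_append G (by omega : l2 ≤ r2) (by omega : r2 ≤ r2')]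
        exact .append hforg hforg'
      have hmuv : MatchesPerfectly F G path (Piece.forest l r') (Piece.forest l2 r2') := by
        refine ⟨by omega, ?_, ?_⟩
        · rw [← frag_append F (by omega : l ≤ r) (by omega : r ≤ r'),
            ← frag_append G (by omega : l2 ≤ r2) (by omega : r2 ≤ r2'), hfrag, hfrag']
        · intro t ht
          by_cases htr : l + t < r
          · exact hal t htr
          · have h := hal' (l + t - r) (by omega)
            rwa [show r + (l + t - r) = l + t by omega,
              show r2 + (l + t - r) = l2 + t by omega] at h
      exact matching_merge hvalid hdisj halign hcons hwidth hmatch hMD hD hgM hg'M hf hf'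
        hcu hcv hPu hPv hcfF hcfG hcf'F hcf'G hmuv
    · simp only [AdjacentUnion] at hadj
  · -- f is a context
    obtain ⟨-, hab, hbc, hcd, -, hdF, htreef, hholef⟩ := context_mem_bounds hD hf
    rcases g with ⟨l2, r2⟩ | ⟨a2, b2, c2, d2⟩
    · simp only [MatchesPerfectly] at hmf
    obtain ⟨hlen1, hlen2, hfragL, hfragR, halL, halR⟩ := hmf
    obtain ⟨ha2b2, hb2c2, hc2d2, hd2G, htree2, hhole2⟩ := (hvalid _ hgM).2
    have h1 : AlignsAt path (b - 1) (b2 - 1) := by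
      have h := halL (b - 1 - a) (by omega)
      rwa [show a + (b - 1 - a) = b - 1 by omega, show a2 + (b - 1 - a) = b2 - 1 by omega] at h
    have h3 : AlignsAt path c c2 := by
      have h := halR 0 (by omega)
      simpa using h
    rcases f' with ⟨l', r'⟩ | ⟨a', b', c', d'⟩
    · -- f' is a forest
      obtain ⟨-, hl'r', -, hr'Flen, hforf'⟩ := forest_mem_bounds hD hf'
      rcases g' with ⟨l2', r2'⟩ | ⟨a2', b2', c2', d2'⟩
      swap
      · simp only [MatchesPerfectly] at hmf'
      obtain ⟨hlen', hfrag', hal'⟩ := hmf'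
      obtain ⟨hl2'r2', hr2'G, hforg'⟩ := (hvalid _ hg'M).2
      have hl2'lt : l2' < r2' := by omega
      rcases hadj with ⟨rfl, rfl, rfl⟩ | ⟨rfl, hner, rfl⟩ | ⟨rfl, hnebl, rfl⟩
      · -- Case II(a) : f' = forest b c, u = forest a d
        have h2 : AlignsAt path b l2' := by
          have h := hal' 0 (by omega)
          simpa using h
        have hord1 : b2 ≤ l2' := by
          rcases aligns_order hch h1 h2 with ⟨e1, e2⟩ | ⟨e1, e2⟩ | ⟨e1, e2⟩ <;> omega
        have hordx : l2' < c2 := by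
          rcases aligns_order hch h2 h3 with ⟨e1, e2⟩ | ⟨e1, e2⟩ | ⟨e1, e2⟩ <;> omega
        have hb2l2' : b2 = l2' := by
          by_contra hne3
          have hpos : posAdjacent (Piece.context a2 b2 c2 d2) b2 := by
            refine ⟨by simp only [pieceChars, Finset.mem_union, Finset.mem_Ico]; omega,
              Or.inr ⟨b2 - 1, by simp only [pieceChars, Finset.mem_union, Finset.mem_Ico]; omega,
                by omega⟩⟩
          obtain ⟨q, hqM, hq2⟩ := hcfG b2 (by omega) hpos
          obtain ⟨x, hx⟩ := matched_aligns_G (hmatch q hqM) hq2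
          exact squeeze_G hch h1 h2 (by omega) (by omega) (by omega) hx
        subst hb2l2'
        have h4 : AlignsAt path (c - 1) (r2' - 1) := by
          have h := hal' (c - 1 - b) (by omega)
          rwa [show b + (c - 1 - b) = c - 1 by omega,
            show b2 + (c - 1 - b) = r2' - 1 by omega] at h
        have hord2 : r2' ≤ c2 := by
          rcases aligns_order hch h4 h3 with ⟨e1, e2⟩ | ⟨e1, e2⟩ | ⟨e1, e2⟩ <;> omega
        have hc2r2' : c2 = r2' := by
          by_contra hne3
          have hpos : posAdjacent (Piece.forest b2 r2') r2' := by
            refine ⟨by simp only [pieceChars, Finset.mem_Ico]; omega,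
              Or.inr ⟨r2' - 1, by simp only [pieceChars, Finset.mem_Ico]; omega, by omega⟩⟩
          obtain ⟨q, hqM, hq2⟩ := hcf'G r2' (by omega) hpos
          obtain ⟨x, hx⟩ := matched_aligns_G (hmatch q hqM) hq2
          exact squeeze_G hch h4 h3 (by omega) (by omega) (by omega) hx
        subst hc2r2'
        refine ⟨Piece.context a2 b2 c2 d2, Piece.forest b2 c2, Piece.forest a2 d2, hgM, hg'M,
          Or.inl ⟨rfl, rfl, rfl⟩, ?_⟩
        have hcu : pieceChars (Piece.forest a d) =
            pieceChars (Piece.context a b c d) ∪ pieceChars (Piece.forest b c) := by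
          ext x
          simp only [pieceChars, Finset.mem_union, Finset.mem_Ico]
          omega
        have hcv : pieceChars (Piece.forest a2 d2) =
            pieceChars (Piece.context a2 b2 c2 d2) ∪ pieceChars (Piece.forest b2 c2) := by
          ext x
          simp only [pieceChars, Finset.mem_union, Finset.mem_Ico]
          omega
        have hPv : IsPiece G (Piece.forest a2 d2) := ⟨by omega, hd2G, htree2.isForest⟩
        have hmuv : MatchesPerfectly F G path (Piece.forest a d) (Piece.forest a2 d2) := by
          refine ⟨by omega, ?_, ?_⟩
          · calc frag F a d = frag F a b ++ frag F b d :=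
                  frag_split F a b d (by omega) (by omega)
              _ = frag F a b ++ (frag F b c ++ frag F c d) := by
                  rw [← frag_split F b c d (by omega) (by omega)]
              _ = frag G a2 b2 ++ (frag G b2 c2 ++ frag G c2 d2) := by
                  rw [hfragL, hfragR, hfrag']
              _ = frag G a2 b2 ++ frag G b2 d2 := by
                  rw [← frag_split G b2 c2 d2 (by omega) (by omega)]
              _ = frag G a2 d2 := (frag_split G a2 b2 d2 (by omega) (by omega)).symm
          · intro t ht
            by_cases hc1 : a + t < b
            · exact halL t hc1
            by_cases hc2' : a + t < c
            · have h := hal' (a + t - b) (by omega)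
              rwa [show b + (a + t - b) = a + t by omega,
                show b2 + (a + t - b) = a2 + t by omega] at h
            · have h := halR (a + t - c) (by omega)
              rwa [show c + (a + t - c) = a + t by omega,
                show c2 + (a + t - c) = a2 + t by omega] at h
        exact matching_merge hvalid hdisj halign hcons hwidth hmatch hMD hD hgM hg'M hf hf'
          hcu hcv hPu hPv hcfF hcfG hcf'F hcf'G hmuv
      · -- Case II(b) : f' = forest b r' with r' < c, u = context a r' c d
        have hr'c : r' ≤ c := by
          by_contra hcon
          have hm1 : c ∈ pieceChars (Piece.context a b c d) := by
            simp only [pieceChars, Finset.mem_union, Finset.mem_Ico]; omega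
          have hm2 : c ∈ pieceChars (Piece.forest b r') := by
            simp only [pieceChars, Finset.mem_Ico]; omega
          exact Finset.disjoint_left.mp hdisjff' hm1 hm2
        have hr'ltc : r' < c := by omega
        have h2 : AlignsAt path b l2' := by
          have h := hal' 0 (by omega)
          simpa using h
        have hord1 : b2 ≤ l2' := by
          rcases aligns_order hch h1 h2 with ⟨e1, e2⟩ | ⟨e1, e2⟩ | ⟨e1, e2⟩ <;> omega
        have hordx : l2' < c2 := by
          rcases aligns_order hch h2 h3 with ⟨e1, e2⟩ | ⟨e1, e2⟩ | ⟨e1, e2⟩ <;> omega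
        have hb2l2' : b2 = l2' := by
          by_contra hne3
          have hpos : posAdjacent (Piece.context a2 b2 c2 d2) b2 := by
            refine ⟨by simp only [pieceChars, Finset.mem_union, Finset.mem_Ico]; omega,
              Or.inr ⟨b2 - 1, by simp only [pieceChars, Finset.mem_union, Finset.mem_Ico]; omega,
                by omega⟩⟩
          obtain ⟨q, hqM, hq2⟩ := hcfG b2 (by omega) hpos
          obtain ⟨x, hx⟩ := matched_aligns_G (hmatch q hqM) hq2
          exact squeeze_G hch h1 h2 (by omega) (by omega) (by omega) hx
        subst hb2l2'
        have h4 : AlignsAt path (r' - 1) (r2' - 1) := by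
          have h := hal' (r' - 1 - b) (by omega)
          rwa [show b + (r' - 1 - b) = r' - 1 by omega,
            show b2 + (r' - 1 - b) = r2' - 1 by omega] at h
        have hord2 : r2' ≤ c2 := by
          rcases aligns_order hch h4 h3 with ⟨e1, e2⟩ | ⟨e1, e2⟩ | ⟨e1, e2⟩ <;> omega
        have hr2'ltc2 : r2' < c2 := by
          rcases eq_or_lt_of_le hord2 with heq | hlt
          · exfalso
            have hpos : posAdjacent (Piece.forest b r') r' := by
              refine ⟨by simp only [pieceChars, Finset.mem_Ico]; omega,
                Or.inr ⟨r' - 1, by simp only [pieceChars, Finset.mem_Ico]; omega, by omega⟩⟩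
            obtain ⟨q, hqM, hq1⟩ := hcf'F r' (by omega) hpos
            obtain ⟨y, hy⟩ := matched_aligns_F (hmatch q hqM) hq1
            exact squeeze_F hch h4 h3 (by omega) (by omega) (by omega) hy
          · exact hlt
        refine ⟨Piece.context a2 b2 c2 d2, Piece.forest b2 r2', Piece.context a2 r2' c2 d2,
          hgM, hg'M, Or.inr (Or.inl ⟨rfl, by omega, rfl⟩), ?_⟩
        have hcu : pieceChars (Piece.context a r' c d) =
            pieceChars (Piece.context a b c d) ∪ pieceChars (Piece.forest b r') := by
          ext x
          simp only [pieceChars, Finset.mem_union, Finset.mem_Ico]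
          omega
        have hcv : pieceChars (Piece.context a2 r2' c2 d2) =
            pieceChars (Piece.context a2 b2 c2 d2) ∪ pieceChars (Piece.forest b2 r2') := by
          ext x
          simp only [pieceChars, Finset.mem_union, Finset.mem_Ico]
          omega
        have hPv : IsPiece G (Piece.context a2 r2' c2 d2) := by
          refine ⟨by omega, by omega, hc2d2, hd2G, htree2, ?_⟩
          have hx : IsForest (frag G b2 r2' ++ frag G r2' c2) := by
            rw [frag_append G (by omega) (by omega)]
            exact hhole2
          exact isForest_append_right hforg' hx
        have hmuv : MatchesPerfectly F G path (Piece.context a r' c d)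
            (Piece.context a2 r2' c2 d2) := by
          refine ⟨by omega, hlen2, ?_, hfragR, ?_, halR⟩
          · calc frag F a r' = frag F a b ++ frag F b r' :=
                  frag_split F a b r' (by omega) (by omega)
              _ = frag G a2 b2 ++ frag G b2 r2' := by rw [hfragL, hfrag']
              _ = frag G a2 r2' := (frag_split G a2 b2 r2' (by omega) (by omega)).symm
          · intro t ht
            by_cases hc1 : a + t < b
            · exact halL t hc1
            · have h := hal' (a + t - b) (by omega)
              rwa [show b + (a + t - b) = a + t by omega,
                show b2 + (a + t - b) = a2 + t by omega] at h
        exact matching_merge hvalid hdisj halign hcons hwidth hmatch hMD hD hgM hg'M hf hf'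
          hcu hcv hPu hPv hcfF hcfG hcf'F hcf'G hmuv
      · -- Case II(c) : f' = forest l' c with b < l', u = context a b l' d
        have hbl' : b ≤ l' := by
          by_contra hcon
          rcases le_or_gt a l' with hal'' | hal''
          · have hm1 : l' ∈ pieceChars (Piece.context a b c d) := by
              simp only [pieceChars, Finset.mem_union, Finset.mem_Ico]; omega
            have hm2 : l' ∈ pieceChars (Piece.forest l' c) := by
              simp only [pieceChars, Finset.mem_Ico]; omega
            exact Finset.disjoint_left.mp hdisjff' hm1 hm2
          · have hm1 : a ∈ pieceChars (Piece.context a b c d) := by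
              simp only [pieceChars, Finset.mem_union, Finset.mem_Ico]; omega
            have hm2 : a ∈ pieceChars (Piece.forest l' c) := by
              simp only [pieceChars, Finset.mem_Ico]; omega
            exact Finset.disjoint_left.mp hdisjff' hm1 hm2
        have hbltl' : b < l' := by omega
        have h2 : AlignsAt path l' l2' := by
          have h := hal' 0 (by omega)
          simpa using h
        have h4 : AlignsAt path (c - 1) (r2' - 1) := by
          have h := hal' (c - 1 - l') (by omega)
          rwa [show l' + (c - 1 - l') = c - 1 by omega,
            show l2' + (c - 1 - l') = r2' - 1 by omega] at h
        have hord2 : r2' ≤ c2 := by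
          rcases aligns_order hch h4 h3 with ⟨e1, e2⟩ | ⟨e1, e2⟩ | ⟨e1, e2⟩ <;> omega
        have hc2r2' : c2 = r2' := by
          by_contra hne3
          have hpos : posAdjacent (Piece.forest l2' r2') r2' := by
            refine ⟨by simp only [pieceChars, Finset.mem_Ico]; omega,
              Or.inr ⟨r2' - 1, by simp only [pieceChars, Finset.mem_Ico]; omega, by omega⟩⟩
          obtain ⟨q, hqM, hq2⟩ := hcf'G r2' (by omega) hpos
          obtain ⟨x, hx⟩ := matched_aligns_G (hmatch q hqM) hq2
          exact squeeze_G hch h4 h3 (by omega) (by omega) (by omega) hx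
        subst hc2r2'
        have hord1 : b2 ≤ l2' := by
          rcases aligns_order hch h1 h2 with ⟨e1, e2⟩ | ⟨e1, e2⟩ | ⟨e1, e2⟩ <;> omega
        have hb2ne : b2 ≠ l2' := by
          intro heq
          have hpos : posAdjacent (Piece.forest l' c) (l' - 1) := by
            refine ⟨by simp only [pieceChars, Finset.mem_Ico]; omega,
              Or.inl (by simp only [pieceChars, Finset.mem_Ico]; omega)⟩
          obtain ⟨q, hqM, hq1⟩ := hcf'F (l' - 1) (by omega) hpos
          obtain ⟨y, hy⟩ := matched_aligns_F (hmatch q hqM) hq1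
          exact squeeze_F hch h1 h2 (by omega) (by omega) (by omega) hy
        refine ⟨Piece.context a2 b2 c2 d2, Piece.forest l2' c2, Piece.context a2 b2 l2' d2,
          hgM, hg'M, Or.inr (Or.inr ⟨rfl, hb2ne, rfl⟩), ?_⟩
        have hcu : pieceChars (Piece.context a b l' d) =
            pieceChars (Piece.context a b c d) ∪ pieceChars (Piece.forest l' c) := by
          ext x
          simp only [pieceChars, Finset.mem_union, Finset.mem_Ico]
          omega
        have hcv : pieceChars (Piece.context a2 b2 l2' d2) =
            pieceChars (Piece.context a2 b2 c2 d2) ∪ pieceChars (Piece.forest l2' c2) := by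
          ext x
          simp only [pieceChars, Finset.mem_union, Finset.mem_Ico]
          omega
        have hPv : IsPiece G (Piece.context a2 b2 l2' d2) := by
          refine ⟨ha2b2, by omega, by omega, hd2G, htree2, ?_⟩
          have hx : IsForest (frag G b2 l2' ++ frag G l2' c2) := by
            rw [frag_append G (by omega) (by omega)]
            exact hhole2
          exact isForest_append_left hforg' hx
        have hmuv : MatchesPerfectly F G path (Piece.context a b l' d)
            (Piece.context a2 b2 l2' d2) := by
          refine ⟨hlen1, by omega, hfragL, ?_, halL, ?_⟩
          · calc frag F l' d = frag F l' c ++ frag F c d :=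
                  frag_split F l' c d (by omega) (by omega)
              _ = frag G l2' c2 ++ frag G c2 d2 := by rw [hfrag', hfragR]
              _ = frag G l2' d2 := (frag_split G l2' c2 d2 (by omega) (by omega)).symm
          · intro t ht
            by_cases hc1 : l' + t < c
            · exact hal' t hc1
            · have h := halR (l' + t - c) (by omega)
              rwa [show c + (l' + t - c) = l' + t by omega,
                show c2 + (l' + t - c) = l2' + t by omega] at h
        exact matching_merge hvalid hdisj halign hcons hwidth hmatch hMD hD hgM hg'M hf hf'
          hcu hcv hPu hPv hcfF hcfG hcf'F hcf'G hmuv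
    · -- Case III : two nested contexts
      obtain ⟨rfl, rfl, rfl⟩ := hadj
      obtain ⟨-, hbb', hb'c', hc'c, -, -, htreef', hholef'⟩ := context_mem_bounds hD hf'
      rcases g' with ⟨l2', r2'⟩ | ⟨a2', b2', c2', d2'⟩
      · simp only [MatchesPerfectly] at hmf'
      obtain ⟨hlen1', hlen2', hfragL', hfragR', halL', halR'⟩ := hmf'
      obtain ⟨ha2'b2', hb2'c2', hc2'd2', hd2'G, htree2', hhole2'⟩ := (hvalid _ hg'M).2
      have h2 : AlignsAt path b a2' := by
        have h := halL' 0 (by omega)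
        simpa using h
      have hord1 : b2 ≤ a2' := by
        rcases aligns_order hch h1 h2 with ⟨e1, e2⟩ | ⟨e1, e2⟩ | ⟨e1, e2⟩ <;> omega
      have hordx : a2' < c2 := by
        rcases aligns_order hch h2 h3 with ⟨e1, e2⟩ | ⟨e1, e2⟩ | ⟨e1, e2⟩ <;> omega
      have hb2a2' : b2 = a2' := by
        by_contra hne3
        have hpos : posAdjacent (Piece.context a2 b2 c2 d2) b2 := by
          refine ⟨by simp only [pieceChars, Finset.mem_union, Finset.mem_Ico]; omega,
            Or.inr ⟨b2 - 1, by simp only [pieceChars, Finset.mem_union, Finset.mem_Ico]; omega,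
              by omega⟩⟩
        obtain ⟨q, hqM, hq2⟩ := hcfG b2 (by omega) hpos
        obtain ⟨x, hx⟩ := matched_aligns_G (hmatch q hqM) hq2
        exact squeeze_G hch h1 h2 (by omega) (by omega) (by omega) hx
      subst hb2a2'
      have h4 : AlignsAt path (c - 1) (d2' - 1) := by
        have h := halR' (c - 1 - c') (by omega)
        rwa [show c' + (c - 1 - c') = c - 1 by omega,
          show c2' + (c - 1 - c') = d2' - 1 by omega] at h
      have hord2 : d2' ≤ c2 := by
        rcases aligns_order hch h4 h3 with ⟨e1, e2⟩ | ⟨e1, e2⟩ | ⟨e1, e2⟩ <;> omega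
      have hc2d2' : c2 = d2' := by
        by_contra hne3
        have hpos : posAdjacent (Piece.context b2 b2' c2' d2') d2' := by
          refine ⟨by simp only [pieceChars, Finset.mem_union, Finset.mem_Ico]; omega,
            Or.inr ⟨d2' - 1, by simp only [pieceChars, Finset.mem_union, Finset.mem_Ico]; omega,
              by omega⟩⟩
        obtain ⟨q, hqM, hq2⟩ := hcf'G d2' (by omega) hpos
        obtain ⟨x, hx⟩ := matched_aligns_G (hmatch q hqM) hq2
        exact squeeze_G hch h4 h3 (by omega) (by omega) (by omega) hx
      subst hc2d2'
      refine ⟨Piece.context a2 b2 c2 d2, Piece.context b2 b2' c2' c2,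
        Piece.context a2 b2' c2' d2, hgM, hg'M, ⟨rfl, rfl, rfl⟩, ?_⟩
      have hcu : pieceChars (Piece.context a b' c' d) =
          pieceChars (Piece.context a b c d) ∪ pieceChars (Piece.context b b' c' c) := by
        ext x
        simp only [pieceChars, Finset.mem_union, Finset.mem_Ico]
        omega
      have hcv : pieceChars (Piece.context a2 b2' c2' d2) =
          pieceChars (Piece.context a2 b2 c2 d2) ∪
            pieceChars (Piece.context b2 b2' c2' c2) := by
        ext x
        simp only [pieceChars, Finset.mem_union, Finset.mem_Ico]
        omega
      have hPv : IsPiece G (Piece.context a2 b2' c2' d2) :=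
        ⟨by omega, hb2'c2', by omega, hd2G, htree2, hhole2'⟩
      have hmuv : MatchesPerfectly F G path (Piece.context a b' c' d)
          (Piece.context a2 b2' c2' d2) := by
        refine ⟨by omega, by omega, ?_, ?_, ?_, ?_⟩
        · calc frag F a b' = frag F a b ++ frag F b b' :=
                frag_split F a b b' (by omega) (by omega)
            _ = frag G a2 b2 ++ frag G b2 b2' := by rw [hfragL, hfragL']
            _ = frag G a2 b2' := (frag_split G a2 b2 b2' (by omega) (by omega)).symm
        · calc frag F c' d = frag F c' c ++ frag F c d :=
                frag_split F c' c d (by omega) (by omega)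
            _ = frag G c2' c2 ++ frag G c2 d2 := by rw [hfragR', hfragR]
            _ = frag G c2' d2 := (frag_split G c2' c2 d2 (by omega) (by omega)).symm
        · intro t ht
          by_cases hc1 : a + t < b
          · exact halL t hc1
          · have h := halL' (a + t - b) (by omega)
            rwa [show b + (a + t - b) = a + t by omega,
              show b2 + (a + t - b) = a2 + t by omega] at h
        · intro t ht
          by_cases hc1 : c' + t < c
          · exact halR' t hc1
          · have h := halR (c' + t - c) (by omega)
            rwa [show c + (c' + t - c) = c' + t by omega,
              show c2 + (c' + t - c) = c2' + t by omega] at h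
      exact matching_merge hvalid hdisj halign hcons hwidth hmatch hMD hD hgM hg'M hf hf'
        hcu hcv hPu hPv hcfF hcfG hcf'F hcf'G hmuv

end Part3
/-- Observation 5.7: for pieces `f, f'` of a piece
decomposition `D` of `F`, adjacency of `f` and `f'` is characterized by the
three boundary conditions on the corresponding nodes of the hierarchy `H_D`
(two touching subforests; a subforest touching a half of a context; two nested
contexts), merging adjacent pieces again yields a piece decomposition, and
merging two clean matched pieces yields a piece matching preserving
cleanliness. -/
theorem merge_adjacent_clean_pieces {α : Type*} (k : ℕ) (hk : 0 < k)
    (F G : List (Paren α)) (hF : IsForest F) (hG : IsForest G)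
    (D : Finset Piece) (hD : IsPieceDecomp F 0 F.length D)
    (f f' : Piece) (hf : f ∈ D) (hf' : f' ∈ D) (hne : f ≠ f') :
    (Adjacent f f' ↔
      ((∃ l r r', f = Piece.forest l r ∧ f' = Piece.forest r r') ∨
       (∃ a b c d, f = Piece.context a b c d ∧
          ((∃ r', f' = Piece.forest b r') ∨ (∃ l', f' = Piece.forest l' c))) ∨
       (∃ a b c d b' c', f = Piece.context a b c d ∧ f' = Piece.context b b' c' c))) ∧
    (∀ u, AdjacentUnion f f' u → IsPieceDecomp F 0 F.length (insert u (D \ {f, f'}))) ∧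
    (∀ M : Finset (Piece × Piece), IsPieceMatching k F G M → (∀ p ∈ M, p.1 ∈ D) →
      CleanPiece F G M f → CleanPiece F G M f' →
      ∀ u, AdjacentUnion f f' u →
      ∃ g g' v, (f, g) ∈ M ∧ (f', g') ∈ M ∧ AdjacentUnion g g' v ∧
        IsPieceMatching k F G (insert (u, v) (M \ {(f, g), (f', g')})) ∧
        (∀ p ∈ insert (u, v) (M \ {(f, g), (f', g')}), p.1 ∈ insert u (D \ {f, f'})) ∧
        CleanPiece F G (insert (u, v) (M \ {(f, g), (f', g')})) u ∧
        (∀ h ∈ D \ ({f, f'} : Finset Piece), CleanPiece F G M h →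
          CleanPiece F G (insert (u, v) (M \ {(f, g), (f', g')})) h)) := by
  refine ⟨adjacent_iff_shape f f', fun u hadj => decomp_merge hD hf hf' hne hadj, ?_⟩
  exact part3_main k F G D hD f f' hf hf' hne
end

section
/- For every string T ∈ P_Σ* and threshold k ∈ ℤ+, there exists a set I of periodic-block fragments of T with |I| ≤ |red(T)|/(2k) such that the set of black positions of T equals the union over T[l..r) ∈ I of the intervals [l+5k..r−5k). -/
open scoped NNReal ENNReal

attribute [local instance] Classical.propDecidable

/-- A string `S` over `P_Σ` is a periodic block (Definition 5.4): `|S| ≥ 42k` and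
`S` has a string period of length at most `4k` containing equally many opening
and closing parentheses. -/
def IsPeriodicBlock {α : Type*} (k : ℕ) (S : List (Paren α)) : Prop :=
  42 * k ≤ S.length ∧ ∃ p, 0 < p ∧ p ≤ 4 * k ∧
    (∀ i, i + p < S.length → S[i]? = S[i + p]?) ∧
    (S.take p).countP (fun c => c.1) = (S.take p).countP (fun c => !c.1)

/-- A character `T[i]` is black (Definition 5.5) if there exists a periodic block
`T[l..r)` of `T` such that `i ∈ [l + 5k..r − 5k)`; otherwise it is red. -/
def IsBlack {α : Type*} (k : ℕ) (T : List (Paren α)) (i : ℕ) : Prop :=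
  ∃ l r, r ≤ T.length ∧ l + 5 * k ≤ i ∧ i + 5 * k < r ∧ IsPeriodicBlock k (frag T l r)

/-- The number of red characters of `T`. -/
noncomputable def redCount {α : Type*} (k : ℕ) (T : List (Paren α)) : ℕ :=
  ((Finset.range T.length).filter fun i => ¬ IsBlack k T i).card

section PeriodAux

variable {γ : Type*}

/-- `f` has period `p` on the index range `[a, b)`. -/
def FOn (f : ℕ → γ) (p a b : ℕ) : Prop := ∀ i, a ≤ i → i + p < b → f i = f (i + p)

lemma FOn.mono {f : ℕ → γ} {p a b a' b' : ℕ} (h : FOn f p a b) (ha : a ≤ a') (hb : b' ≤ b) :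
    FOn f p a' b' := fun i hi hib => h i (le_trans ha hi) (lt_of_lt_of_le hib hb)

lemma FOn.iterate {f : ℕ → γ} {g a b : ℕ} (h : FOn f g a b) :
    ∀ j i, a ≤ i → i + j * g < b → f i = f (i + j * g) := by
  intro j
  induction j with
  | zero => intro i _ _; simp
  | succ j IH =>
    intro i hi hib
    have e : (j + 1) * g = j * g + g := by rw [add_mul, one_mul]
    have h1 : f i = f (i + j * g) := IH i hi (by omega)
    have h2 : f (i + j * g) = f (i + j * g + g) := h (i + j * g) (by omega) (by omega)
    rw [h1, h2]
    congr 1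
    omega

lemma fw_aux (f : ℕ → γ) : ∀ n p q a b, p + q ≤ n → 0 < q → q ≤ p → a + p + q ≤ b →
    FOn f p a b → FOn f q a b → FOn f (Nat.gcd p q) a b := by
  intro n
  induction n with
  | zero => intro p q a b hn hq0 _ _ _ _; exact absurd hn (by omega)
  | succ n IH =>
    intro p q a b hn hq0 hqp hab hfp hfq
    rcases eq_or_lt_of_le hqp with heq | hlt
    · subst heq
      rw [Nat.gcd_self]
      exact hfq
    · have hp0 : 0 < p := lt_trans hq0 hlt
      have hpq0 : 0 < p - q := by omega
      have hgcd : Nat.gcd (p - q) q = Nat.gcd p q := Nat.gcd_sub_self_left hqp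
      have hfpq : FOn f (p - q) a (b - q) := by
        intro i hi hib
        have h1 : f i = f (i + p) := hfp i hi (by omega)
        have h2 : f (i + (p - q)) = f (i + (p - q) + q) := hfq (i + (p - q)) (by omega) (by omega)
        have e : i + (p - q) + q = i + p := by omega
        rw [h1, h2, e]
      have hfq' : FOn f q a (b - q) := hfq.mono le_rfl (by omega)
      have hrec : FOn f (Nat.gcd p q) a (b - q) := by
        rw [← hgcd]
        rcases le_total q (p - q) with h | h
        · exact IH (p - q) q a (b - q) (by omega) hq0 h (by omega) hfpq hfq'
        · have := IH q (p - q) a (b - q) (by omega) hpq0 h (by omega) hfq' hfpq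
          rwa [Nat.gcd_comm] at this
      have hgq : Nat.gcd p q ≤ q := Nat.le_of_dvd hq0 (Nat.gcd_dvd_right p q)
      have hgpq : Nat.gcd p q ≤ p - q :=
        Nat.le_of_dvd hpq0 (Nat.dvd_sub (Nat.gcd_dvd_left p q) (Nat.gcd_dvd_right p q))
      intro i hi hib
      by_cases hc : i + Nat.gcd p q < b - q
      · exact hrec i hi hc
      · have hiq : a + q ≤ i := by omega
        have e1 : f (i - q) = f i := by
          have := hfq (i - q) (by omega) (by omega)
          rwa [Nat.sub_add_cancel (by omega)] at this
        have e2 : f (i - q + Nat.gcd p q) = f (i + Nat.gcd p q) := by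
          have := hfq (i - q + Nat.gcd p q) (by omega) (by omega)
          rwa [show i - q + Nat.gcd p q + q = i + Nat.gcd p q by omega] at this
        have e3 : f (i - q) = f (i - q + Nat.gcd p q) := hrec (i - q) (by omega) (by omega)
        rw [← e1, e3, e2]

lemma fw (f : ℕ → γ) {p q a b : ℕ} (hp : 0 < p) (hq : 0 < q) (hab : a + p + q ≤ b)
    (h1 : FOn f p a b) (h2 : FOn f q a b) : FOn f (Nat.gcd p q) a b := by
  rcases le_total q p with h | h
  · exact fw_aux f (p + q) p q a b le_rfl hq h hab h1 h2
  · have := fw_aux f (q + p) q p a b le_rfl hp h (by omega) h2 h1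
    rwa [Nat.gcd_comm] at this

lemma ext_left (f : ℕ → γ) {p g b : ℕ} (hp0 : 0 < p) :
    ∀ n a c, c - a = n → a ≤ c → c + p + g ≤ b →
      FOn f p a b → FOn f g c b → FOn f g a b := by
  intro n
  induction n with
  | zero =>
    intro a c h0 hac _ _ hg
    have : a = c := by omega
    subst this
    exact hg
  | succ n IH =>
    intro a c h0 hac hcb hp hg
    have hac' : a < c := by omega
    have hstep : FOn f g (c - 1) b := by
      intro i hi hib
      rcases eq_or_lt_of_le hi with heq | hlt'
      · subst heq
        have h1 : f (c - 1) = f (c - 1 + p) := hp (c - 1) (by omega) (by omega)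
        have h2 : f (c - 1 + g) = f (c - 1 + g + p) := hp (c - 1 + g) (by omega) (by omega)
        have h3 : f (c - 1 + p) = f (c - 1 + p + g) := hg (c - 1 + p) (by omega) (by omega)
        rw [h1, h3, show c - 1 + p + g = c - 1 + g + p by omega, ← h2]
      · exact hg i (by omega) hib
    exact IH a (c - 1) (by omega) (by omega) (by omega) hp hstep

lemma ext_right (f : ℕ → γ) {p g a : ℕ} (hp0 : 0 < p) (hg0 : 0 < g) :
    ∀ n b c, b - c = n → c ≤ b → a + p + g ≤ c →
      FOn f p a b → FOn f g a c → FOn f g a b := by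
  intro n
  induction n with
  | zero =>
    intro b c h0 hcb _ _ hg
    have : b = c := by omega
    subst this
    exact hg
  | succ n IH =>
    intro b c h0 hcb hc hp hg
    have hcb' : c < b := by omega
    have hstep : FOn f g a (c + 1) := by
      intro i hi hib
      by_cases hic : i + g < c
      · exact hg i hi hic
      · obtain rfl : i = c - g := by omega
        have h1 := hp (c - g - p) (by omega) (by omega)
        have h2 := hp (c - p) (by omega) (by omega)
        have h3 := hg (c - g - p) (by omega) (by omega)
        rw [show c - g - p + p = c - g by omega] at h1
        rw [show c - p + p = c by omega] at h2
        rw [show c - g - p + g = c - p by omega] at h3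
        rw [show c - g + g = c by omega]
        rw [← h1, h3, h2]
    exact IH b (c + 1) (by omega) (by omega) (by omega) hp hstep

end PeriodAux

section FragAux

lemma frag_eq {β : Type*} (T : List β) (l r : ℕ) : frag T l r = (T.drop l).take (r - l) :=
  List.drop_take ..

lemma frag_length_s19 {β : Type*} (T : List β) {l r : ℕ} (hlr : l ≤ r) (hr : r ≤ T.length) :
    (frag T l r).length = r - l := by
  rw [frag_eq]
  simp only [List.length_take, List.length_drop]
  omega

lemma frag_getElem? {β : Type*} (T : List β) {l r i : ℕ} (h : l + i < r) :
    (frag T l r)[i]? = T[l + i]? := by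
  rw [frag_eq, List.getElem?_take, if_pos (show i < r - l by omega), List.getElem?_drop]

lemma countP_take_mul {β : Type*} (D : List β) (P : β → Bool) (g : ℕ) :
    ∀ m, (∀ j i, j < m → i < g → D[j * g + i]? = D[i]?) →
      (D.take (m * g)).countP P = m * (D.take g).countP P := by
  intro m
  induction m with
  | zero => simp
  | succ m IH =>
    intro hwin
    have e : (m + 1) * g = m * g + g := by rw [add_mul, one_mul]
    have hwineq : (D.drop (m * g)).take g = D.take g := by
      apply List.ext_getElem?
      intro i
      simp only [List.getElem?_take, List.getElem?_drop]
      by_cases hig : i < g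
      · simp only [if_pos hig]
        exact hwin m i (by omega) hig
      · simp [hig]
    rw [e, List.take_add, List.countP_append, hwineq,
      IH (fun j i hj hi => hwin j i (by omega) hi)]
    ring

/-- The count condition of a periodic block, phrased on `T` directly. -/
def PCond {α : Type*} (T : List (Paren α)) (p l : ℕ) : Prop :=
  ((T.drop l).take p).countP (fun c => c.1) = ((T.drop l).take p).countP (fun c => !c.1)

lemma ipb_iff {α : Type*} {k : ℕ} (hk : 0 < k) (T : List (Paren α)) {l r : ℕ}
    (hlr : l ≤ r) (hr : r ≤ T.length) :
    IsPeriodicBlock k (frag T l r) ↔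
      l + 42 * k ≤ r ∧ ∃ p, 0 < p ∧ p ≤ 4 * k ∧
        FOn (fun i => T[i]?) p l r ∧ PCond T p l := by
  have htake : ∀ p : ℕ, p ≤ r - l → (frag T l r).take p = (T.drop l).take p := by
    intro p hp
    rw [frag_eq, List.take_take, min_eq_left hp]
  constructor
  · rintro ⟨hlen, p, hp0, hp4, hper, hcnt⟩
    rw [frag_length_s19 T hlr hr] at hlen
    refine ⟨by omega, p, hp0, hp4, ?_, ?_⟩
    · intro i hi hib
      have h1 := hper (i - l) (by rw [frag_length_s19 T hlr hr]; omega)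
      rw [frag_getElem? T (show l + (i - l) < r by omega),
        frag_getElem? T (show l + (i - l + p) < r by omega),
        show l + (i - l) = i by omega, show l + (i - l + p) = i + p by omega] at h1
      exact h1
    · have ht := htake p (by omega)
      rw [ht] at hcnt
      exact hcnt
  · rintro ⟨hlen, p, hp0, hp4, hper, hcnt⟩
    refine ⟨by rw [frag_length_s19 T hlr hr]; omega, p, hp0, hp4, ?_, ?_⟩
    · intro i hib
      rw [frag_length_s19 T hlr hr] at hib
      rw [frag_getElem? T (show l + i < r by omega),
        frag_getElem? T (show l + (i + p) < r by omega)]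
      have := hper (l + i) (by omega) (by omega)
      rwa [show l + i + p = l + (i + p) by omega] at this
    · rw [htake p (by omega)]
      exact hcnt

lemma block_lb {α : Type*} {k : ℕ} (hk : 0 < k) (T : List (Paren α)) {l r : ℕ}
    (hr : r ≤ T.length) (hb : IsPeriodicBlock k (frag T l r)) : l + 42 * k ≤ r := by
  have hlen := hb.1
  have he : (frag T l r).length = min r T.length - l := by
    unfold frag
    rw [List.length_drop, List.length_take]
  rw [he] at hlen
  omega

lemma merge_blocks {α : Type*} {k : ℕ} (hk : 0 < k) (T : List (Paren α)) {l1 r1 l2 r2 : ℕ}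
    (h12 : l1 ≤ l2) (ho1 : l2 + 8 * k ≤ r1) (ho2 : l2 + 8 * k ≤ r2)
    (hr1 : r1 ≤ T.length) (hr2 : r2 ≤ T.length)
    (hb1 : IsPeriodicBlock k (frag T l1 r1)) (hb2 : IsPeriodicBlock k (frag T l2 r2)) :
    IsPeriodicBlock k (frag T l1 (max r1 r2)) := by
  rcases le_total r2 r1 with h | h
  · rwa [max_eq_left h]
  · rw [max_eq_right h]
    rw [ipb_iff hk T (by omega) hr1] at hb1
    rw [ipb_iff hk T (by omega) hr2] at hb2
    obtain ⟨hlen1, p1, hp10, hp14, hper1, hcnt1⟩ := hb1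
    obtain ⟨hlen2, p2, hp20, hp24, hper2, hcnt2⟩ := hb2
    have hg0 : 0 < Nat.gcd p1 p2 := Nat.gcd_pos_of_pos_left p2 hp10
    have hgp1 : Nat.gcd p1 p2 ∣ p1 := Nat.gcd_dvd_left p1 p2
    have hg4 : Nat.gcd p1 p2 ≤ 4 * k := le_trans (Nat.le_of_dvd hp10 hgp1) hp14
    have hgp2 : Nat.gcd p1 p2 ≤ p2 := Nat.le_of_dvd hp20 (Nat.gcd_dvd_right p1 p2)
    have hgle1 : Nat.gcd p1 p2 ≤ p1 := Nat.le_of_dvd hp10 hgp1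
    have hov : FOn (fun i => T[i]?) (Nat.gcd p1 p2) l2 r1 :=
      fw _ hp10 hp20 (by omega) (hper1.mono h12 le_rfl) (hper2.mono le_rfl h)
    have hleft : FOn (fun i => T[i]?) (Nat.gcd p1 p2) l1 r1 :=
      ext_left _ hp10 (l2 - l1) l1 l2 rfl h12 (by omega) hper1 hov
    have hright : FOn (fun i => T[i]?) (Nat.gcd p1 p2) l2 r2 :=
      ext_right _ hp20 hg0 (r2 - r1) r2 r1 rfl h (by omega) hper2 hov
    have hunion : FOn (fun i => T[i]?) (Nat.gcd p1 p2) l1 r2 := by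
      intro i hi hib
      by_cases hc : i + Nat.gcd p1 p2 < r1
      · exact hleft i hi hc
      · exact hright i (by omega) hib
    obtain ⟨m, hm⟩ := hgp1
    have hmg : m * Nat.gcd p1 p2 = p1 := by rw [Nat.mul_comm]; exact hm.symm
    have hm0 : 0 < m := by
      rcases Nat.eq_zero_or_pos m with rfl | h0
      · simp at hmg; omega
      · exact h0
    have hwin : ∀ j i, j < m → i < Nat.gcd p1 p2 →
        (T.drop l1)[j * Nat.gcd p1 p2 + i]? = (T.drop l1)[i]? := by
      intro j i hj hi
      rw [List.getElem?_drop, List.getElem?_drop]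
      have hjg : (j + 1) * Nat.gcd p1 p2 ≤ m * Nat.gcd p1 p2 :=
        Nat.mul_le_mul_right _ (by omega)
      have e : (j + 1) * Nat.gcd p1 p2 = j * Nat.gcd p1 p2 + Nat.gcd p1 p2 := by
        rw [add_mul, one_mul]
      have hb : l1 + i + j * Nat.gcd p1 p2 < r1 := by omega
      have h2 := hleft.iterate j (l1 + i) (by omega) hb
      rw [show l1 + i + j * Nat.gcd p1 p2 = l1 + (j * Nat.gcd p1 p2 + i) by omega] at h2
      exact h2.symm
    have hcnt : PCond T (Nat.gcd p1 p2) l1 := by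
      have hmul1 := countP_take_mul (T.drop l1) (fun c => c.1) (Nat.gcd p1 p2) m hwin
      have hmul2 := countP_take_mul (T.drop l1) (fun c => !c.1) (Nat.gcd p1 p2) m hwin
      rw [hmg] at hmul1 hmul2
      unfold PCond at hcnt1 ⊢
      rw [hmul1, hmul2] at hcnt1
      exact Nat.eq_of_mul_eq_mul_left hm0 hcnt1
    rw [ipb_iff hk T (by omega) hr2]
    exact ⟨by omega, Nat.gcd p1 p2, hg0, hg4, hunion, hcnt⟩

end FragAux

/-- from Lemma C.6: for every string `T` and threshold
`k ∈ ℤ₊`, there exists a set `I` of periodic-block fragments of `T` with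
`|I| ≤ |red(T)| / (2k)` (equivalently `2k·|I| ≤ |red(T)|`) such that the black
positions of `T` are exactly the union over `T[l..r) ∈ I` of the intervals
`[l + 5k..r − 5k)`. -/
theorem black_positions_covered {α : Type*} (k : ℕ) (hk : 0 < k)
    (T : List (Paren α)) :
    ∃ I : Finset (ℕ × ℕ),
      (∀ q ∈ I, q.2 ≤ T.length ∧ IsPeriodicBlock k (frag T q.1 q.2)) ∧
      2 * k * I.card ≤ redCount k T ∧
      ∀ i, IsBlack k T i ↔ ∃ q ∈ I, q.1 + 5 * k ≤ i ∧ i + 5 * k < q.2 := by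
  classical
  set B : Finset (ℕ × ℕ) := (Finset.range (T.length + 1) ×ˢ Finset.range (T.length + 1)).filter
      (fun q => q.2 ≤ T.length ∧ IsPeriodicBlock k (frag T q.1 q.2)) with hB
  have hmemB : ∀ q : ℕ × ℕ, q ∈ B ↔ q.2 ≤ T.length ∧ IsPeriodicBlock k (frag T q.1 q.2) := by
    intro q
    rw [hB, Finset.mem_filter, Finset.mem_product, Finset.mem_range, Finset.mem_range]
    constructor
    · rintro ⟨_, h⟩; exact h
    · intro h
      have hlb := block_lb hk T h.1 h.2
      exact ⟨⟨by omega, by omega⟩, h⟩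
  set M : Finset (ℕ × ℕ) := B.filter (fun q => ∀ q' ∈ B, q'.1 ≤ q.1 → q.2 ≤ q'.2 → q' = q)
    with hM
  have hmemM : ∀ q : ℕ × ℕ, q ∈ M ↔ q ∈ B ∧ ∀ q' ∈ B, q'.1 ≤ q.1 → q.2 ≤ q'.2 → q' = q := by
    intro q
    rw [hM, Finset.mem_filter]
  -- every block has a maximal block above it
  have hexmax : ∀ q ∈ B, ∃ m ∈ M, m.1 ≤ q.1 ∧ q.2 ≤ m.2 := by
    intro q hq
    set S := B.filter (fun q' => q'.1 ≤ q.1 ∧ q.2 ≤ q'.2) with hS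
    have hqS : q ∈ S := by rw [hS, Finset.mem_filter]; exact ⟨hq, le_rfl, le_rfl⟩
    obtain ⟨m, hmS, hmax⟩ := S.exists_max_image (fun q' => q'.2 - q'.1) ⟨q, hqS⟩
    rw [hS, Finset.mem_filter] at hmS
    obtain ⟨hmB, hm1, hm2⟩ := hmS
    have hmlb : m.1 + 42 * k ≤ m.2 := by
      have h := (hmemB m).mp hmB
      exact block_lb hk T h.1 h.2
    refine ⟨m, ?_, hm1, hm2⟩
    rw [hmemM]
    refine ⟨hmB, ?_⟩
    intro q' hq' h1 h2
    have hq'S : q' ∈ S := by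
      rw [hS, Finset.mem_filter]
      exact ⟨hq', le_trans h1 hm1, le_trans hm2 h2⟩
    have hle := hmax q' hq'S
    have e1 : q'.1 = m.1 := by omega
    have e2 : q'.2 = m.2 := by omega
    exact Prod.ext e1 e2
  -- merging a block into a member of B
  have hmergeB : ∀ (l' r' : ℕ) (q : ℕ × ℕ), q ∈ B → r' ≤ T.length →
      IsPeriodicBlock k (frag T l' r') → l' ≤ q.1 → q.1 + 8 * k ≤ r' →
      (l', max r' q.2) ∈ B := by
    intro l' r' q hq hr' hb' h1 h2
    rw [hmemB] at hq ⊢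
    have hqlb := block_lb hk T hq.1 hq.2
    exact ⟨max_le hr' hq.1, merge_blocks hk T h1 h2 (by omega) hr' hq.1 hb' hq.2⟩
  -- distinct maximal blocks have far-apart left endpoints
  have hsep : ∀ q ∈ M, ∀ q' ∈ M, q ≠ q' → q.1 + 2 * k ≤ q'.1 ∨ q'.1 + 2 * k ≤ q.1 := by
    have key : ∀ q ∈ M, ∀ q' ∈ M, q.1 ≤ q'.1 → q'.1 < q.1 + 2 * k → q = q' := by
      intro q hq q' hq' hle hlt
      rw [hmemM] at hq hq'
      have hqB := (hmemB q).mp hq.1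
      have hq'B := (hmemB q').mp hq'.1
      have hqlb := block_lb hk T hqB.1 hqB.2
      have hq'lb := block_lb hk T hq'B.1 hq'B.2
      have hm := hmergeB q.1 q.2 q' hq'.1 hqB.1 hqB.2 hle (by omega)
      have heq := hq'.2 (q.1, max q.2 q'.2) hm hle (le_max_right _ _)
      have e1' := congrArg Prod.fst heq
      have e1 : q.1 = q'.1 := e1'
      have e2' := congrArg Prod.snd heq
      have e2 : max q.2 q'.2 = q'.2 := e2'
      have e3 : q.2 ≤ q'.2 := le_trans (le_max_left _ _) (le_of_eq e2)
      exact (hq.2 q' hq'.1 (le_of_eq e1.symm) e3).symm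
    intro q hq q' hq' hne
    by_contra hcon
    push_neg at hcon
    rcases le_total q.1 q'.1 with hle | hle
    · exact hne (key q hq q' hq' hle (by omega))
    · exact hne (key q' hq' q hq hle (by omega)).symm
  -- the 2k positions [q.1+3k, q.1+5k) of a maximal block are red
  have hred : ∀ q ∈ M, ∀ i, q.1 + 3 * k ≤ i → i < q.1 + 5 * k →
      i < T.length ∧ ¬ IsBlack k T i := by
    intro q hq i h3 h5
    rw [hmemM] at hq
    have hqB := (hmemB q).mp hq.1
    have hqlb := block_lb hk T hqB.1 hqB.2
    refine ⟨by omega, ?_⟩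
    rintro ⟨l', r', hr', hl', hir', hb'⟩
    have hl'lb := block_lb hk T hr' hb'
    have hl'q : l' < q.1 := by omega
    have hm := hmergeB l' r' q hq.1 hr' hb' (by omega) (by omega)
    have heq := hq.2 (l', max r' q.2) hm (by omega) (le_max_right _ _)
    have e1' := congrArg Prod.fst heq
    have e1 : l' = q.1 := e1'
    omega
  refine ⟨M, ?_, ?_, ?_⟩
  · intro q hq
    exact (hmemB q).mp ((hmemM q).mp hq).1
  · -- cardinality bound
    have hsub : M.biUnion (fun q => Finset.Ico (q.1 + 3 * k) (q.1 + 5 * k)) ⊆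
        (Finset.range T.length).filter (fun i => ¬ IsBlack k T i) := by
      intro i hi
      rw [Finset.mem_biUnion] at hi
      obtain ⟨q, hq, hiq⟩ := hi
      rw [Finset.mem_Ico] at hiq
      have h := hred q hq i hiq.1 hiq.2
      rw [Finset.mem_filter, Finset.mem_range]
      exact ⟨h.1, h.2⟩
    have hdisj : ∀ q ∈ M, ∀ q' ∈ M, q ≠ q' →
        Disjoint (Finset.Ico (q.1 + 3 * k) (q.1 + 5 * k))
          (Finset.Ico (q'.1 + 3 * k) (q'.1 + 5 * k)) := by
      intro q hq q' hq' hne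
      have h := hsep q hq q' hq' hne
      rw [Finset.disjoint_left]
      intro i hi hi'
      rw [Finset.mem_Ico] at hi hi'
      omega
    have hcard := Finset.card_biUnion hdisj
    have hcc : ∀ q ∈ M, (Finset.Ico (q.1 + 3 * k) (q.1 + 5 * k)).card = 2 * k := by
      intro q _
      rw [Nat.card_Ico]
      omega
    have h1 : 2 * k * M.card =
        (M.biUnion (fun q => Finset.Ico (q.1 + 3 * k) (q.1 + 5 * k))).card := by
      rw [hcard, Finset.sum_congr rfl hcc, Finset.sum_const, smul_eq_mul, Nat.mul_comm]
    rw [h1]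
    exact Finset.card_le_card hsub
  · intro i
    constructor
    · rintro ⟨l, r, hr, h5l, h5r, hb⟩
      have hB' : (l, r) ∈ B := (hmemB (l, r)).mpr ⟨hr, hb⟩
      obtain ⟨m, hm, h1, h2⟩ := hexmax (l, r) hB'
      have h1' : m.1 ≤ l := h1
      have h2' : r ≤ m.2 := h2
      exact ⟨m, hm, by omega, by omega⟩
    · rintro ⟨q, hq, h1, h2⟩
      have hqB := (hmemB q).mp ((hmemM q).mp hq).1
      exact ⟨q.1, q.2, hqB.1, h1, h2, hqB.2⟩
end
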